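/- arXiv:1405.5118 — 15 statements merged into one kernel-verified Lean document; each statement's English description precedes it below -/
import Mathlib

section
/- Let U ⊆ ℝⁿ be open and l₁,…,lₙ : U → ℝ smooth functions, and let L : U → (ℝⁿ →L[ℝ] ℝⁿ) be the diagonal field of operators defined by L(x)eᵢ = lᵢ(x)eᵢ for the standard basis (e₁,…,eₙ). Then the Haantjes tensor of L vanishes identically: H_L(X,Y)(x) = 0 for all smooth vector fields X, Y : U → ℝⁿ and all x ∈ U. (Paper: Proposition 2.5, 'if there exists a local chart in which L assumes diagonal form, then the Haantjes tensor of L vanishes'.) -/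
variable {E : Type*} [NormedAddCommGroup E] [NormedSpace ℝ E]

/-- Lie bracket of vector fields on a normed space:
`[X,Y](x) = (fderiv Y x)(X x) − (fderiv X x)(Y x)`. -/
noncomputable def lieBracket (X Y : E → E) : E → E :=
  fun x => fderiv ℝ Y x (X x) - fderiv ℝ X x (Y x)

/-- The vector field `LX : x ↦ L(x)(X(x))`. -/
noncomputable def opVec (L : E → (E →L[ℝ] E)) (X : E → E) : E → E :=
  fun x => L x (X x)

/-- Nijenhuis torsion of a field of operators:
`T_L(X,Y) = L²[X,Y] + [LX,LY] − L([X,LY] + [LX,Y])`. -/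
noncomputable def nijenhuisTorsion (L : E → (E →L[ℝ] E)) (X Y : E → E) : E → E :=
  fun x =>
    L x (L x (lieBracket X Y x)) + lieBracket (opVec L X) (opVec L Y) x
      - L x (lieBracket X (opVec L Y) x + lieBracket (opVec L X) Y x)

/-- Haantjes tensor of a field of operators:
`H_L(X,Y) = L²T_L(X,Y) + T_L(LX,LY) − L(T_L(X,LY) + T_L(LX,Y))`. -/
noncomputable def haantjesTensor (L : E → (E →L[ℝ] E)) (X Y : E → E) : E → E :=
  fun x =>
    L x (L x (nijenhuisTorsion L X Y x)) + nijenhuisTorsion L (opVec L X) (opVec L Y) x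
      - L x (nijenhuisTorsion L X (opVec L Y) x + nijenhuisTorsion L (opVec L X) Y x)

/-! ### Auxiliary material -/

/-- The canonical diagonal field of operators with eigenvalue functions `l`. -/
noncomputable def Ldiag {n : ℕ} (l : Fin n → (Fin n → ℝ) → ℝ) (x : Fin n → ℝ) :
    (Fin n → ℝ) →L[ℝ] (Fin n → ℝ) :=
  ContinuousLinearMap.pi fun k => l k x • ContinuousLinearMap.proj k

@[simp] lemma Ldiag_apply {n : ℕ} (l : Fin n → (Fin n → ℝ) → ℝ) (x v : Fin n → ℝ)
    (k : Fin n) : Ldiag l x v k = l k x * v k := by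
  simp [Ldiag]

lemma opVec_eqOn {U : Set E} {L L' : E → E →L[ℝ] E} {A A' : E → E}
    (hL : Set.EqOn L L' U) (hA : Set.EqOn A A' U) :
    Set.EqOn (opVec L A) (opVec L' A') U := fun x hx => by
  simp only [opVec, hL hx, hA hx]

lemma lieBracket_eqOn {U : Set E} (hU : IsOpen U) {A A' B B' : E → E}
    (hA : Set.EqOn A A' U) (hB : Set.EqOn B B' U) :
    Set.EqOn (lieBracket A B) (lieBracket A' B') U := by
  intro x hx
  have hA' : A =ᶠ[nhds x] A' := Filter.eventuallyEq_of_mem (hU.mem_nhds hx) hA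
  have hB' : B =ᶠ[nhds x] B' := Filter.eventuallyEq_of_mem (hU.mem_nhds hx) hB
  simp only [lieBracket, hA'.fderiv_eq, hB'.fderiv_eq, hA hx, hB hx]

lemma nijenhuisTorsion_eqOn {U : Set E} (hU : IsOpen U) {L L' : E → E →L[ℝ] E}
    {A A' B B' : E → E} (hL : Set.EqOn L L' U)
    (hA : Set.EqOn A A' U) (hB : Set.EqOn B B' U) :
    Set.EqOn (nijenhuisTorsion L A B) (nijenhuisTorsion L' A' B') U := by
  intro x hx
  simp only [nijenhuisTorsion, hL hx,
    lieBracket_eqOn hU hA hB hx,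
    lieBracket_eqOn hU (opVec_eqOn hL hA) (opVec_eqOn hL hB) hx,
    lieBracket_eqOn hU hA (opVec_eqOn hL hB) hx,
    lieBracket_eqOn hU (opVec_eqOn hL hA) hB hx]

lemma haantjesTensor_eqOn {U : Set E} (hU : IsOpen U) {L L' : E → E →L[ℝ] E}
    {A A' B B' : E → E} (hL : Set.EqOn L L' U)
    (hA : Set.EqOn A A' U) (hB : Set.EqOn B B' U) :
    Set.EqOn (haantjesTensor L A B) (haantjesTensor L' A' B') U := by
  intro x hx
  simp only [haantjesTensor, hL hx,
    nijenhuisTorsion_eqOn hU hL hA hB hx,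
    nijenhuisTorsion_eqOn hU hL (opVec_eqOn hL hA) (opVec_eqOn hL hB) hx,
    nijenhuisTorsion_eqOn hU hL hA (opVec_eqOn hL hB) hx,
    nijenhuisTorsion_eqOn hU hL (opVec_eqOn hL hA) hB hx]

lemma contDiffOn_opVec_Ldiag {n : ℕ} {U : Set (Fin n → ℝ)}
    {l : Fin n → (Fin n → ℝ) → ℝ} (hl : ∀ i, ContDiffOn ℝ (⊤ : ℕ∞) (l i) U)
    {Z : (Fin n → ℝ) → (Fin n → ℝ)} (hZ : ContDiffOn ℝ (⊤ : ℕ∞) Z U) :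
    ContDiffOn ℝ (⊤ : ℕ∞) (opVec (Ldiag l) Z) U := by
  rw [contDiffOn_pi]
  intro k
  have : (fun z => opVec (Ldiag l) Z z k) = fun z => l k z * Z z k := by
    funext z; simp [opVec]
  rw [this]
  exact (hl k).mul (contDiffOn_pi.mp hZ k)

lemma hasFDerivAt_opVec_Ldiag {n : ℕ} {U : Set (Fin n → ℝ)} (hU : IsOpen U)
    {l : Fin n → (Fin n → ℝ) → ℝ} (hl : ∀ i, ContDiffOn ℝ (⊤ : ℕ∞) (l i) U)
    {Z : (Fin n → ℝ) → (Fin n → ℝ)} (hZ : ContDiffOn ℝ (⊤ : ℕ∞) Z U)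
    {x : Fin n → ℝ} (hx : x ∈ U) :
    HasFDerivAt (opVec (Ldiag l) Z)
      (ContinuousLinearMap.pi fun k =>
        l k x • ((ContinuousLinearMap.proj k).comp (fderiv ℝ Z x))
          + Z x k • fderiv ℝ (l k) x) x := by
  have hmem : U ∈ nhds x := hU.mem_nhds hx
  have hZd : HasFDerivAt Z (fderiv ℝ Z x) x :=
    (((hZ.contDiffAt hmem).differentiableAt (by simp))).hasFDerivAt
  rw [hasFDerivAt_pi']
  intro k
  rw [ContinuousLinearMap.proj_pi]
  have h1 : HasFDerivAt (l k) (fderiv ℝ (l k) x) x :=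
    ((((hl k).contDiffAt hmem).differentiableAt (by simp))).hasFDerivAt
  have h2 : HasFDerivAt (fun z => Z z k)
      ((ContinuousLinearMap.proj k).comp (fderiv ℝ Z x)) x :=
    hasFDerivAt_pi'.mp hZd k
  exact h1.mul h2

lemma fderiv_opVec_Ldiag_apply {n : ℕ} {U : Set (Fin n → ℝ)} (hU : IsOpen U)
    {l : Fin n → (Fin n → ℝ) → ℝ} (hl : ∀ i, ContDiffOn ℝ (⊤ : ℕ∞) (l i) U)
    {Z : (Fin n → ℝ) → (Fin n → ℝ)} (hZ : ContDiffOn ℝ (⊤ : ℕ∞) Z U)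
    {x : Fin n → ℝ} (hx : x ∈ U) (v : Fin n → ℝ) (k : Fin n) :
    fderiv ℝ (opVec (Ldiag l) Z) x v k
      = l k x * fderiv ℝ Z x v k + Z x k * fderiv ℝ (l k) x v := by
  rw [(hasFDerivAt_opVec_Ldiag hU hl hZ hx).fderiv]
  simp [ContinuousLinearMap.pi_apply, smul_eq_mul]

lemma torsion_diag {n : ℕ} {U : Set (Fin n → ℝ)} (hU : IsOpen U)
    {l : Fin n → (Fin n → ℝ) → ℝ} (hl : ∀ i, ContDiffOn ℝ (⊤ : ℕ∞) (l i) U)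
    {Z W : (Fin n → ℝ) → (Fin n → ℝ)}
    (hZ : ContDiffOn ℝ (⊤ : ℕ∞) Z U) (hW : ContDiffOn ℝ (⊤ : ℕ∞) W U)
    {x : Fin n → ℝ} (hx : x ∈ U) (k : Fin n) :
    nijenhuisTorsion (Ldiag l) Z W x k =
      W x k * (fderiv ℝ (l k) x (Ldiag l x (Z x)) - l k x * fderiv ℝ (l k) x (Z x))
      - Z x k * (fderiv ℝ (l k) x (Ldiag l x (W x)) - l k x * fderiv ℝ (l k) x (W x)) := by
  simp only [nijenhuisTorsion, lieBracket, Pi.add_apply, Pi.sub_apply, Ldiag_apply,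
    fderiv_opVec_Ldiag_apply hU hl hZ hx, fderiv_opVec_Ldiag_apply hU hl hW hx]
  simp only [opVec]
  ring

/-- Paper, Proposition 2.5: if `L` is a diagonal field of operators
`L(x)eᵢ = lᵢ(x)eᵢ` on an open set `U ⊆ ℝⁿ` with smooth eigenvalue functions `lᵢ`,
then its Haantjes tensor vanishes identically on `U`. -/
theorem haantjes_of_diagonal {n : ℕ} (U : Set (Fin n → ℝ)) (hU : IsOpen U)
    (l : Fin n → (Fin n → ℝ) → ℝ) (hl : ∀ i, ContDiffOn ℝ (⊤ : ℕ∞) (l i) U)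
    (L : (Fin n → ℝ) → ((Fin n → ℝ) →L[ℝ] (Fin n → ℝ)))
    (hLdiag : ∀ x ∈ U, ∀ i,
      L x (Pi.single i 1) = l i x • (Pi.single i 1 : Fin n → ℝ))
    (X Y : (Fin n → ℝ) → (Fin n → ℝ))
    (hX : ContDiffOn ℝ (⊤ : ℕ∞) X U) (hY : ContDiffOn ℝ (⊤ : ℕ∞) Y U) :
    ∀ x ∈ U, haantjesTensor L X Y x = 0 := by
  -- `L` agrees with the canonical diagonal field on `U`
  have hLd : Set.EqOn L (Ldiag l) U := by
    intro x hx
    refine ContinuousLinearMap.ext fun v => ?_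
    have hv : v = ∑ i, v i • (Pi.single i 1 : Fin n → ℝ) := by
      funext j
      simp [Pi.single_apply]
    conv_lhs => rw [hv]
    rw [map_sum]
    funext k
    rw [Finset.sum_apply]
    have : ∀ i, (L x (v i • (Pi.single i 1 : Fin n → ℝ))) k
        = v i * (l i x * ((Pi.single i 1 : Fin n → ℝ) k)) := by
      intro i
      rw [map_smul, hLdiag x hx i]
      simp [smul_eq_mul, mul_assoc]
    simp only [this]
    rw [Ldiag_apply]
    have : ∀ i ∈ Finset.univ, v i * (l i x * ((Pi.single i 1 : Fin n → ℝ) k))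
        = if k = i then l k x * v k else 0 := by
      intro i _
      rcases eq_or_ne k i with h | h
      · subst h; simp [Pi.single_apply]; ring
      · simp [Pi.single_apply, h]
    rw [Finset.sum_congr rfl this, Finset.sum_ite_eq Finset.univ k fun _ => l k x * v k]
    simp
  intro x hx
  rw [haantjesTensor_eqOn hU hLd (fun _ _ => rfl) (fun _ _ => rfl) hx]
  have hLX := contDiffOn_opVec_Ldiag hl hX
  have hLY := contDiffOn_opVec_Ldiag hl hY
  funext k
  simp only [haantjesTensor, Pi.add_apply, Pi.sub_apply, Ldiag_apply, Pi.zero_apply]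
  rw [torsion_diag hU hl hX hY hx k, torsion_diag hU hl hLX hLY hx k,
    torsion_diag hU hl hX hLY hx k, torsion_diag hU hl hLX hY hx k]
  simp only [opVec, Ldiag_apply]
  ring
end

section
/- Let E be a two-dimensional real normed space (e.g. ℝ²), U ⊆ E open, and L : U → (E →L[ℝ] E) any smooth field of operators. Then the Haantjes tensor of L vanishes identically: H_L(X,Y)(x) = 0 for all smooth vector fields X, Y : U → E and all x ∈ U. (Paper: Example 2.4, 'if dim M = 2 then the Haantjes tensor of any field of smooth operators vanishes'.) -/
variable {E : Type*} [NormedAddCommGroup E] [NormedSpace ℝ E]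

/-- The explicit bilinear form giving the pointwise Nijenhuis torsion. -/
noncomputable def bform (A : E →L[ℝ] E) (D : E →L[ℝ] (E →L[ℝ] E)) :
    E →ₗ[ℝ] E →ₗ[ℝ] E :=
  LinearMap.mk₂ ℝ (fun u v => D (A u) v - D (A v) u - A (D u v) + A (D v u))
    (fun u u' v => by simp [map_add]; abel)
    (fun c u v => by simp [map_smul, smul_sub, smul_add])
    (fun u v v' => by simp [map_add]; abel)
    (fun c u v => by simp [map_smul, smul_sub, smul_add])

lemma bform_skew (A : E →L[ℝ] E) (D : E →L[ℝ] (E →L[ℝ] E)) (u v : E) :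
    bform A D u v = - bform A D v u := by
  simp [bform]; abel

lemma nij_eq (L : E → (E →L[ℝ] E)) (X Y : E → E) (x : E)
    (hL : DifferentiableAt ℝ L x) (hX : DifferentiableAt ℝ X x)
    (hY : DifferentiableAt ℝ Y x) :
    nijenhuisTorsion L X Y x = bform (L x) (fderiv ℝ L x) (X x) (Y x) := by
  have dLX : fderiv ℝ (opVec L X) x
      = (L x).comp (fderiv ℝ X x) + (fderiv ℝ L x).flip (X x) := by
    unfold opVec; exact fderiv_clm_apply hL hX
  have dLY : fderiv ℝ (opVec L Y) x
      = (L x).comp (fderiv ℝ Y x) + (fderiv ℝ L x).flip (Y x) := by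
    unfold opVec; exact fderiv_clm_apply hL hY
  simp only [nijenhuisTorsion, lieBracket, dLX, dLY, bform, LinearMap.mk₂_apply,
    ContinuousLinearMap.add_apply, ContinuousLinearMap.coe_comp', Function.comp_apply,
    ContinuousLinearMap.flip_apply, opVec, map_add, map_sub]
  abel

lemma alg (hdim : Module.finrank ℝ E = 2) (A : E →L[ℝ] E)
    (B : E →ₗ[ℝ] E →ₗ[ℝ] E) (hB : ∀ u v, B u v = - B v u) (u v : E) :
    A (A (B u v)) + B (A u) (A v) - A (B u (A v) + B (A u) v) = 0 := by
  have : Module.Finite ℝ E := Module.finite_of_finrank_eq_succ hdim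
  let b := Module.finBasisOfFinrankEq ℝ E hdim
  set e0 := b 0 with he0
  set e1 := b 1 with he1
  have hrep : ∀ x : E, x = b.repr x 0 • e0 + b.repr x 1 • e1 := by
    intro x
    have h := b.sum_repr x
    rw [Fin.sum_univ_two] at h
    exact h.symm
  set a := b.repr (A e0) 0
  set c := b.repr (A e0) 1
  set a' := b.repr (A e1) 0
  set d := b.repr (A e1) 1
  have hA0 : A e0 = a • e0 + c • e1 := hrep _
  have hA1 : A e1 = a' • e0 + d • e1 := hrep _
  have hB00 : B e0 e0 = 0 := by
    have h2 : (2:ℝ) • B e0 e0 = 0 := by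
      rw [two_smul]; nth_rw 1 [hB e0 e0]; abel
    simpa using h2
  have hB11 : B e1 e1 = 0 := by
    have h2 : (2:ℝ) • B e1 e1 = 0 := by
      rw [two_smul]; nth_rw 1 [hB e1 e1]; abel
    simpa using h2
  have hBexp : ∀ p q r s : ℝ,
      B (p • e0 + q • e1) (r • e0 + s • e1) = (p * s - q * r) • B e0 e1 := by
    intro p q r s
    simp only [map_add, map_smul, LinearMap.add_apply, LinearMap.smul_apply,
      hB00, hB11, hB e1 e0, smul_zero, smul_neg]
    module
  have hCH : ∀ x : E, A (A x) = (a + d) • A x - (a * d - a' * c) • x := by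
    intro x
    obtain ⟨x0, x1, hx⟩ : ∃ x0 x1 : ℝ, x = x0 • e0 + x1 • e1 := ⟨_, _, hrep x⟩
    rw [hx]
    simp only [map_add, map_smul, hA0, hA1, smul_add, smul_smul, smul_sub]
    module
  obtain ⟨u0, u1, hu⟩ : ∃ u0 u1 : ℝ, u = u0 • e0 + u1 • e1 := ⟨_, _, hrep u⟩
  obtain ⟨v0, v1, hv⟩ : ∃ v0 v1 : ℝ, v = v0 • e0 + v1 • e1 := ⟨_, _, hrep v⟩
  have hAu : A u = (a * u0 + a' * u1) • e0 + (c * u0 + d * u1) • e1 := by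
    rw [hu]; simp only [map_add, map_smul, hA0, hA1, smul_add, smul_smul]; module
  have hAv : A v = (a * v0 + a' * v1) • e0 + (c * v0 + d * v1) • e1 := by
    rw [hv]; simp only [map_add, map_smul, hA0, hA1, smul_add, smul_smul]; module
  have h1 : B u v = (u0 * v1 - u1 * v0) • B e0 e1 := by rw [hu, hv, hBexp]
  have h2 : B (A u) (A v) = ((a * u0 + a' * u1) * (c * v0 + d * v1)
      - (c * u0 + d * u1) * (a * v0 + a' * v1)) • B e0 e1 := by
    rw [hAu, hAv, hBexp]
  have h3 : B u (A v) = (u0 * (c * v0 + d * v1) - u1 * (a * v0 + a' * v1)) • B e0 e1 := by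
    rw [hu, hAv, hBexp]
  have h4 : B (A u) v = ((a * u0 + a' * u1) * v1 - (c * u0 + d * u1) * v0) • B e0 e1 := by
    rw [hAu, hv, hBexp]
  rw [h1, h2, h3, h4]
  simp only [map_add, map_smul, hCH]
  module

/-- Paper, Example 2.4: on a two-dimensional real normed space,
the Haantjes tensor of any smooth field of operators vanishes identically. -/
theorem haantjes_of_dim_two {E : Type*} [NormedAddCommGroup E] [NormedSpace ℝ E]
    (hdim : Module.finrank ℝ E = 2)
    (U : Set E) (hU : IsOpen U)
    (L : E → (E →L[ℝ] E)) (hL : ContDiffOn ℝ (⊤ : ℕ∞) L U)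
    (X Y : E → E) (hX : ContDiffOn ℝ (⊤ : ℕ∞) X U) (hY : ContDiffOn ℝ (⊤ : ℕ∞) Y U) :
    ∀ x ∈ U, haantjesTensor L X Y x = 0 := by
  intro x hx
  have hLd : DifferentiableAt ℝ L x :=
    (hL.contDiffAt (hU.mem_nhds hx)).differentiableAt (by simp)
  have hXd : DifferentiableAt ℝ X x :=
    (hX.contDiffAt (hU.mem_nhds hx)).differentiableAt (by simp)
  have hYd : DifferentiableAt ℝ Y x :=
    (hY.contDiffAt (hU.mem_nhds hx)).differentiableAt (by simp)
  have hLXd : DifferentiableAt ℝ (opVec L X) x := hLd.clm_apply hXd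
  have hLYd : DifferentiableAt ℝ (opVec L Y) x := hLd.clm_apply hYd
  have e1 := nij_eq L X Y x hLd hXd hYd
  have e2 := nij_eq L (opVec L X) (opVec L Y) x hLd hLXd hLYd
  have e3 := nij_eq L X (opVec L Y) x hLd hXd hLYd
  have e4 := nij_eq L (opVec L X) Y x hLd hLXd hYd
  simp only [haantjesTensor, e1, e2, e3, e4, opVec]
  exact alg hdim (L x) (bform (L x) (fderiv ℝ L x)) (bform_skew _ _) (X x) (Y x)
end

section
/- Let U ⊆ ℝⁿ be open and l₁,…,lₙ : U → ℝ smooth, and let N : U → (ℝⁿ →L[ℝ] ℝⁿ) be the diagonal field of operators N(x)eᵢ = lᵢ(x)eᵢ. Assume the Nijenhuis torsion of N vanishes identically. Then for every i the differential of the eigenvalue lᵢ is an eigenform of the transposed operator with eigenvalue lᵢ: for all x ∈ U and all j, l_j(x)·(∂lᵢ/∂x_j)(x) = lᵢ(x)·(∂lᵢ/∂x_j)(x), i.e. N(x)ᵀ dlᵢ(x) = lᵢ(x) dlᵢ(x). (Paper: Proposition 2.7, stated for a diagonal(izable) Nijenhuis operator.) -/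
variable {E : Type*} [NormedAddCommGroup E] [NormedSpace ℝ E]

/-- Paper, Proposition 2.7: for a diagonal Nijenhuis operator
`N(x)eᵢ = lᵢ(x)eᵢ` with identically vanishing Nijenhuis torsion, the differential of each
eigenvalue `lᵢ` is an eigenform of the transposed operator `Nᵀ` with eigenvalue `lᵢ`:
`l_j(x)·(∂lᵢ/∂x_j)(x) = lᵢ(x)·(∂lᵢ/∂x_j)(x)` for all `x ∈ U` and all `j`. -/
theorem diagonal_nijenhuis_eigenform {n : ℕ} (U : Set (Fin n → ℝ)) (hU : IsOpen U)
    (l : Fin n → (Fin n → ℝ) → ℝ) (hl : ∀ i, ContDiffOn ℝ (⊤ : ℕ∞) (l i) U)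
    (N : (Fin n → ℝ) → ((Fin n → ℝ) →L[ℝ] (Fin n → ℝ)))
    (hNdiag : ∀ x ∈ U, ∀ i,
      N x (Pi.single i 1) = l i x • (Pi.single i 1 : Fin n → ℝ))
    (hT : ∀ X Y : (Fin n → ℝ) → (Fin n → ℝ),
      ContDiffOn ℝ (⊤ : ℕ∞) X U → ContDiffOn ℝ (⊤ : ℕ∞) Y U →
      ∀ x ∈ U, nijenhuisTorsion N X Y x = 0) :
    ∀ x ∈ U, ∀ i j : Fin n,
      l j x * fderiv ℝ (l i) x (Pi.single j 1)
        = l i x * fderiv ℝ (l i) x (Pi.single j 1) := by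
  intro x hx i j
  rcases eq_or_ne i j with rfl | hij
  · rfl
  have hmem : U ∈ nhds x := hU.mem_nhds hx
  have hdi : DifferentiableAt ℝ (l i) x :=
    ((hl i).contDiffAt hmem).differentiableAt (by simp)
  have hdj : DifferentiableAt ℝ (l j) x :=
    ((hl j).contDiffAt hmem).differentiableAt (by simp)
  set ei : Fin n → ℝ := Pi.single i 1 with hei
  set ej : Fin n → ℝ := Pi.single j 1 with hej
  have hXeq : opVec N (fun _ => ei) =ᶠ[nhds x] fun y => l i y • ei :=
    Filter.eventuallyEq_of_mem hmem (fun y hy => hNdiag y hy i)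
  have hYeq : opVec N (fun _ => ej) =ᶠ[nhds x] fun y => l j y • ej :=
    Filter.eventuallyEq_of_mem hmem (fun y hy => hNdiag y hy j)
  have hfX : fderiv ℝ (opVec N (fun _ => ei)) x = (fderiv ℝ (l i) x).smulRight ei := by
    rw [hXeq.fderiv_eq, fderiv_smul_const hdi ei]
  have hfY : fderiv ℝ (opVec N (fun _ => ej)) x = (fderiv ℝ (l j) x).smulRight ej := by
    rw [hYeq.fderiv_eq, fderiv_smul_const hdj ej]
  have h := hT (fun _ => ei) (fun _ => ej) contDiffOn_const contDiffOn_const x hx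
  simp only [nijenhuisTorsion, lieBracket, opVec, fderiv_fun_const, Pi.zero_apply,
    ContinuousLinearMap.zero_apply, hfX, hfY, ContinuousLinearMap.smulRight_apply,
    sub_zero, zero_sub, map_zero, map_add, map_neg, map_smul] at h
  have hNe : N x ei = l i x • ei := hNdiag x hx i
  have hNf : N x ej = l j x • ej := hNdiag x hx j
  rw [hNe, hNf] at h
  have hc := congrFun h i
  simp only [Pi.add_apply, Pi.sub_apply, Pi.smul_apply, Pi.neg_apply, Pi.zero_apply,
    smul_eq_mul, map_smul, hei, hej, Pi.single_eq_same, Pi.single_eq_of_ne hij, Pi.single_eq_of_ne (Ne.symm hij)] at hc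
  ring_nf at hc ⊢
  linarith
end

section
/- Let U ⊆ E be open in a finite-dimensional real normed space, L : U → (E →L[ℝ] E) a smooth field of operators, and f : U → ℝ smooth. Then for all smooth vector fields X, Y on U: T_{fL}(X,Y) = f²·T_L(X,Y) + f·( (LX)(f)·LY − (LY)(f)·LX + Y(f)·L²X − X(f)·L²Y ), where fL denotes the field of operators x ↦ f(x)L(x). (Paper: identity (2.13).) -/
variable {E : Type*} [NormedAddCommGroup E] [NormedSpace ℝ E]

lemma lb_smul_right {f : E → ℝ} {Z : E → E} {x : E} (X : E → E)
    (hf : DifferentiableAt ℝ f x) (hZ : DifferentiableAt ℝ Z x) :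
    lieBracket X (fun y => f y • Z y) x
      = f x • lieBracket X Z x + (fderiv ℝ f x (X x)) • Z x := by
  simp only [lieBracket, fderiv_fun_smul hf hZ, ContinuousLinearMap.add_apply,
    ContinuousLinearMap.smul_apply, ContinuousLinearMap.smulRight_apply, map_smul]
  module

lemma lb_smul_left {f : E → ℝ} {W : E → E} {x : E} (Z : E → E)
    (hf : DifferentiableAt ℝ f x) (hW : DifferentiableAt ℝ W x) :
    lieBracket (fun y => f y • W y) Z x
      = f x • lieBracket W Z x - (fderiv ℝ f x (Z x)) • W x := by
  simp only [lieBracket, fderiv_fun_smul hf hW, ContinuousLinearMap.add_apply,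
    ContinuousLinearMap.smul_apply, ContinuousLinearMap.smulRight_apply, map_smul]
  module

/-- Paper, identity (2.13):
`T_{fL}(X,Y) = f²·T_L(X,Y) + f·((LX)(f)·LY − (LY)(f)·LX + Y(f)·L²X − X(f)·L²Y)`. -/
theorem nijenhuisTorsion_smul {E : Type*} [NormedAddCommGroup E] [NormedSpace ℝ E]
    [FiniteDimensional ℝ E]
    (U : Set E) (hU : IsOpen U)
    (L : E → (E →L[ℝ] E)) (hL : ContDiffOn ℝ (⊤ : ℕ∞) L U)
    (f : E → ℝ) (hf : ContDiffOn ℝ (⊤ : ℕ∞) f U)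
    (X Y : E → E) (hX : ContDiffOn ℝ (⊤ : ℕ∞) X U) (hY : ContDiffOn ℝ (⊤ : ℕ∞) Y U) :
    ∀ x ∈ U,
      nijenhuisTorsion (fun y => f y • L y) X Y x
        = (f x) ^ 2 • nijenhuisTorsion L X Y x
          + f x • ((fderiv ℝ f x (L x (X x))) • (L x (Y x))
              - (fderiv ℝ f x (L x (Y x))) • (L x (X x))
              + (fderiv ℝ f x (Y x)) • (L x (L x (X x)))
              - (fderiv ℝ f x (X x)) • (L x (L x (Y x)))) := by
  intro x hx
  have hmem := hU.mem_nhds hx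
  have hfx : DifferentiableAt ℝ f x :=
    (hf.differentiableOn (by simp)).differentiableAt hmem
  have hLXx : DifferentiableAt ℝ (opVec L X) x :=
    ((hL.clm_apply hX).differentiableOn (by simp)).differentiableAt hmem
  have hLYx : DifferentiableAt ℝ (opVec L Y) x :=
    ((hL.clm_apply hY).differentiableOn (by simp)).differentiableAt hmem
  have eX : opVec (fun y => f y • L y) X = fun y => f y • opVec L X y := rfl
  have eY : opVec (fun y => f y • L y) Y = fun y => f y • opVec L Y y := rfl
  have h1 : lieBracket (fun y => f y • opVec L X y) (fun y => f y • opVec L Y y) x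
      = f x • lieBracket (opVec L X) (fun y => f y • opVec L Y y) x
        - (fderiv ℝ f x (f x • opVec L Y x)) • opVec L X x :=
    lb_smul_left _ hfx hLXx
  have h2 : lieBracket X (fun y => f y • opVec L Y y) x
      = f x • lieBracket X (opVec L Y) x + (fderiv ℝ f x (X x)) • opVec L Y x :=
    lb_smul_right X hfx hLYx
  have h3 : lieBracket (fun y => f y • opVec L X y) Y x
      = f x • lieBracket (opVec L X) Y x - (fderiv ℝ f x (Y x)) • opVec L X x :=
    lb_smul_left Y hfx hLXx
  have h4 : lieBracket (opVec L X) (fun y => f y • opVec L Y y) x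
      = f x • lieBracket (opVec L X) (opVec L Y) x
        + (fderiv ℝ f x (opVec L X x)) • opVec L Y x :=
    lb_smul_right _ hfx hLYx
  simp only [nijenhuisTorsion, eX, eY, h1, h4, h2, h3]
  simp only [opVec, lieBracket, ContinuousLinearMap.smul_apply, map_add, map_sub,
    map_smul, smul_eq_mul]
  module
end

section
/- Let U ⊆ E be open in a finite-dimensional real normed space, L : U → (E →L[ℝ] E) a smooth field of operators, and f, g : U → ℝ smooth functions. Then for all smooth vector fields X, Y on U: H_{fI + gL}(X,Y) = g⁴·H_L(X,Y), where fI + gL denotes the field of operators x ↦ f(x)·id_E + g(x)·L(x). (Paper: Proposition 2.8.) -/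
variable {E : Type*} [NormedAddCommGroup E] [NormedSpace ℝ E]

private lemma opVec_def' {E : Type*} [NormedAddCommGroup E] [NormedSpace ℝ E]
    (L : E → (E →L[ℝ] E)) (X : E → E) :
    opVec L X = fun x => L x (X x) := rfl

set_option maxHeartbeats 4000000 in
set_option maxRecDepth 100000 in
/-- Paper, Proposition 2.8: `H_{fI + gL}(X,Y) = g⁴·H_L(X,Y)`. -/
theorem haantjes_smul_affine {E : Type*} [NormedAddCommGroup E] [NormedSpace ℝ E]
    [FiniteDimensional ℝ E]
    (U : Set E) (hU : IsOpen U)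
    (L : E → (E →L[ℝ] E)) (hL : ContDiffOn ℝ (⊤ : ℕ∞) L U)
    (f g : E → ℝ) (hf : ContDiffOn ℝ (⊤ : ℕ∞) f U) (hg : ContDiffOn ℝ (⊤ : ℕ∞) g U)
    (X Y : E → E) (hX : ContDiffOn ℝ (⊤ : ℕ∞) X U) (hY : ContDiffOn ℝ (⊤ : ℕ∞) Y U) :
    ∀ x ∈ U,
      haantjesTensor (fun y => f y • (1 : E →L[ℝ] E) + g y • L y) X Y x
        = (g x) ^ 4 • haantjesTensor L X Y x := by
  intro x hx
  have hmem : U ∈ nhds x := hU.mem_nhds hx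
  have hLd : DifferentiableAt ℝ L x := ((hL.differentiableOn (by simp)) x hx).differentiableAt hmem
  have hfd : DifferentiableAt ℝ f x := ((hf.differentiableOn (by simp)) x hx).differentiableAt hmem
  have hgd : DifferentiableAt ℝ g x := ((hg.differentiableOn (by simp)) x hx).differentiableAt hmem
  have hXd : DifferentiableAt ℝ X x := ((hX.differentiableOn (by simp)) x hx).differentiableAt hmem
  have hYd : DifferentiableAt ℝ Y x := ((hY.differentiableOn (by simp)) x hx).differentiableAt hmem
  simp only [haantjesTensor, nijenhuisTorsion, lieBracket, opVec_def']
  simp (disch := fun_prop) only [fderiv_clm_apply, fderiv_fun_add, fderiv_fun_smul, fderiv_fun_const]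
  simp only [ContinuousLinearMap.add_apply, ContinuousLinearMap.coe_comp',
    Function.comp_apply, ContinuousLinearMap.flip_apply, ContinuousLinearMap.smulRight_apply,
    ContinuousLinearMap.smul_apply, ContinuousLinearMap.one_apply,
    ContinuousLinearMap.zero_apply, map_add, map_smul, map_sub, smul_eq_mul, smul_add, smul_sub,
    smul_smul, ContinuousLinearMap.coe_smul', Pi.smul_apply, smul_zero,
    add_zero, zero_add]
  module
end

section
/- Let U ⊆ E be open in a finite-dimensional real normed space, L : U → (E →L[ℝ] E) a smooth field of operators, μ, ν : U → ℝ smooth functions, and X, Y smooth vector fields on U that are pointwise proper eigenvector fields: L(x)X(x) = μ(x)X(x) and L(x)Y(x) = ν(x)Y(x) for all x ∈ U. Then the Nijenhuis torsion satisfies T_L(X,Y) = (L − μI)(L − νI)[X,Y] + (μ − ν)·( X(ν)·Y + Y(μ)·X ), where I is the identity operator. (Paper: identity (3.7) specialized to proper eigenvector fields, i.e. Jordan chains of length one.) -/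
variable {E : Type*} [NormedAddCommGroup E] [NormedSpace ℝ E]

/-- Paper, identity (3.7) for proper eigenvector fields: if
`LX = μX` and `LY = νY` pointwise on `U`, then
`T_L(X,Y) = (L − μI)(L − νI)[X,Y] + (μ − ν)·(X(ν)·Y + Y(μ)·X)`. -/
theorem nijenhuisTorsion_eigenvector_fields {E : Type*}
    [NormedAddCommGroup E] [NormedSpace ℝ E] [FiniteDimensional ℝ E]
    (U : Set E) (hU : IsOpen U)
    (L : E → (E →L[ℝ] E)) (hL : ContDiffOn ℝ (⊤ : ℕ∞) L U)
    (μ ν : E → ℝ) (hμ : ContDiffOn ℝ (⊤ : ℕ∞) μ U) (hν : ContDiffOn ℝ (⊤ : ℕ∞) ν U)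
    (X Y : E → E) (hX : ContDiffOn ℝ (⊤ : ℕ∞) X U) (hY : ContDiffOn ℝ (⊤ : ℕ∞) Y U)
    (hXeig : ∀ x ∈ U, L x (X x) = μ x • X x)
    (hYeig : ∀ x ∈ U, L x (Y x) = ν x • Y x) :
    ∀ x ∈ U,
      nijenhuisTorsion L X Y x
        = (L x - μ x • (1 : E →L[ℝ] E)) ((L x - ν x • (1 : E →L[ℝ] E)) (lieBracket X Y x))
          + (μ x - ν x) • ((fderiv ℝ ν x (X x)) • Y x + (fderiv ℝ μ x (Y x)) • X x) := by
  intro x hx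
  have hmem : U ∈ nhds x := hU.mem_nhds hx
  have hμd : DifferentiableAt ℝ μ x := ((hμ.contDiffAt hmem).differentiableAt (by simp))
  have hνd : DifferentiableAt ℝ ν x := ((hν.contDiffAt hmem).differentiableAt (by simp))
  have hXd : DifferentiableAt ℝ X x := ((hX.contDiffAt hmem).differentiableAt (by simp))
  have hYd : DifferentiableAt ℝ Y x := ((hY.contDiffAt hmem).differentiableAt (by simp))
  have hLXe : opVec L X =ᶠ[nhds x] fun y => μ y • X y := by
    filter_upwards [hmem] with y hy
    exact hXeig y hy
  have hLYe : opVec L Y =ᶠ[nhds x] fun y => ν y • Y y := by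
    filter_upwards [hmem] with y hy
    exact hYeig y hy
  have hfLX : fderiv ℝ (opVec L X) x = fderiv ℝ (fun y => μ y • X y) x := hLXe.fderiv_eq
  have hfLY : fderiv ℝ (opVec L Y) x = fderiv ℝ (fun y => ν y • Y y) x := hLYe.fderiv_eq
  have hsX : fderiv ℝ (fun y => μ y • X y) x
      = μ x • fderiv ℝ X x + (fderiv ℝ μ x).smulRight (X x) := fderiv_smul hμd hXd
  have hsY : fderiv ℝ (fun y => ν y • Y y) x
      = ν x • fderiv ℝ Y x + (fderiv ℝ ν x).smulRight (Y x) := fderiv_smul hνd hYd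
  have hvX : opVec L X x = μ x • X x := hXeig x hx
  have hvY : opVec L Y x = ν x • Y x := hYeig x hx
  simp only [nijenhuisTorsion, lieBracket, hfLX, hfLY, hsX, hsY, hvX, hvY,
    ContinuousLinearMap.add_apply, ContinuousLinearMap.smul_apply,
    ContinuousLinearMap.smulRight_apply, ContinuousLinearMap.sub_apply,
    ContinuousLinearMap.one_apply, map_add, map_sub, map_smul,
    hXeig x hx, hYeig x hx, smul_sub, smul_add, smul_smul]
  module
end

section
/- Let U ⊆ E be open in a finite-dimensional real normed space, L : U → (E →L[ℝ] E) a smooth field of operators, μ, ν : U → ℝ smooth functions, and X, Y smooth vector fields on U with L(x)X(x) = μ(x)X(x) and L(x)Y(x) = ν(x)Y(x) for all x ∈ U. Then the Haantjes tensor satisfies H_L(X,Y) = (L − μI)²(L − νI)²[X,Y]. (Paper: identity (3.8) specialized to proper eigenvector fields.) -/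
variable {E : Type*} [NormedAddCommGroup E] [NormedSpace ℝ E]

lemma lieBracket_congr {A A' B B' : E → E} {x : E}
    (hA : A =ᶠ[nhds x] A') (hB : B =ᶠ[nhds x] B') :
    lieBracket A B x = lieBracket A' B' x := by
  unfold lieBracket
  rw [hA.fderiv_eq, hB.fderiv_eq, hA.eq_of_nhds, hB.eq_of_nhds]

lemma nij_congr {L : E → (E →L[ℝ] E)} {A A' B B' : E → E} {x : E}
    (hA : A =ᶠ[nhds x] A') (hB : B =ᶠ[nhds x] B') :
    nijenhuisTorsion L A B x = nijenhuisTorsion L A' B' x := by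
  have hLA : opVec L A =ᶠ[nhds x] opVec L A' := hA.mono fun y hy => by simp [opVec, hy]
  have hLB : opVec L B =ᶠ[nhds x] opVec L B' := hB.mono fun y hy => by simp [opVec, hy]
  unfold nijenhuisTorsion
  rw [lieBracket_congr hA hB, lieBracket_congr hLA hLB, lieBracket_congr hA hLB,
    lieBracket_congr hLA hB]

lemma bracket_smul (f g : E → ℝ) (X Y : E → E) (x : E)
    (hf : DifferentiableAt ℝ f x) (hg : DifferentiableAt ℝ g x)
    (hX : DifferentiableAt ℝ X x) (hY : DifferentiableAt ℝ Y x) :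
    lieBracket (fun y => f y • X y) (fun y => g y • Y y) x
      = (f x * g x) • lieBracket X Y x + (f x * fderiv ℝ g x (X x)) • Y x
        - (g x * fderiv ℝ f x (Y x)) • X x := by
  unfold lieBracket
  rw [fderiv_fun_smul hf hX, fderiv_fun_smul hg hY]
  simp only [ContinuousLinearMap.add_apply, ContinuousLinearMap.smul_apply,
    ContinuousLinearMap.smulRight_apply, map_smul, smul_eq_mul]
  module

/-- Paper, identity (3.8) for proper eigenvector fields: if
`LX = μX` and `LY = νY` pointwise on `U`, then
`H_L(X,Y) = (L − μI)²(L − νI)²[X,Y]`. -/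
theorem haantjes_eigenvector_fields {E : Type*}
    [NormedAddCommGroup E] [NormedSpace ℝ E] [FiniteDimensional ℝ E]
    (U : Set E) (hU : IsOpen U)
    (L : E → (E →L[ℝ] E)) (hL : ContDiffOn ℝ (⊤ : ℕ∞) L U)
    (μ ν : E → ℝ) (hμ : ContDiffOn ℝ (⊤ : ℕ∞) μ U) (hν : ContDiffOn ℝ (⊤ : ℕ∞) ν U)
    (X Y : E → E) (hX : ContDiffOn ℝ (⊤ : ℕ∞) X U) (hY : ContDiffOn ℝ (⊤ : ℕ∞) Y U)
    (hXeig : ∀ x ∈ U, L x (X x) = μ x • X x)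
    (hYeig : ∀ x ∈ U, L x (Y x) = ν x • Y x) :
    ∀ x ∈ U,
      haantjesTensor L X Y x
        = ((L x - μ x • (1 : E →L[ℝ] E)) ^ 2 * (L x - ν x • (1 : E →L[ℝ] E)) ^ 2)
            (lieBracket X Y x) := by
  intro x hx
  have hmem : U ∈ nhds x := hU.mem_nhds hx
  have hXd : DifferentiableAt ℝ X x := (hX.contDiffAt hmem).differentiableAt (by simp)
  have hYd : DifferentiableAt ℝ Y x := (hY.contDiffAt hmem).differentiableAt (by simp)
  have hμd : DifferentiableAt ℝ μ x := (hμ.contDiffAt hmem).differentiableAt (by simp)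
  have hνd : DifferentiableAt ℝ ν x := (hν.contDiffAt hmem).differentiableAt (by simp)
  have ha : L x (X x) = μ x • X x := hXeig x hx
  have hb : L x (Y x) = ν x • Y x := hYeig x hx
  set Bv := lieBracket X Y x with hBv
  set p := fderiv ℝ ν x (X x) with hp
  set q := fderiv ℝ μ x (Y x) with hq
  set T0 : E := L x (L x Bv) - (μ x + ν x) • L x Bv + (μ x * ν x) • Bv
      + ((μ x - ν x) * p) • Y x + ((μ x - ν x) * q) • X x with hT0
  have hEX : opVec L X =ᶠ[nhds x] fun y => μ y • X y :=
    Filter.eventuallyEq_of_mem hmem fun y hy => by simp [opVec, hXeig y hy]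
  have hEY : opVec L Y =ᶠ[nhds x] fun y => ν y • Y y :=
    Filter.eventuallyEq_of_mem hmem fun y hy => by simp [opVec, hYeig y hy]
  have key : ∀ (f g : E → ℝ), DifferentiableAt ℝ f x → DifferentiableAt ℝ g x →
      nijenhuisTorsion L (fun y => f y • X y) (fun y => g y • Y y) x
        = (f x * g x) • T0 := by
    intro f g hf hg
    have hEfX : opVec L (fun y => f y • X y) =ᶠ[nhds x] fun y => (f y * μ y) • X y :=
      Filter.eventuallyEq_of_mem hmem fun y hy => by
        simp [opVec, map_smul, hXeig y hy, smul_smul]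
    have hEgY : opVec L (fun y => g y • Y y) =ᶠ[nhds x] fun y => (g y * ν y) • Y y :=
      Filter.eventuallyEq_of_mem hmem fun y hy => by
        simp [opVec, map_smul, hYeig y hy, smul_smul]
    unfold nijenhuisTorsion
    rw [lieBracket_congr hEfX hEgY, lieBracket_congr (Filter.EventuallyEq.refl _ _) hEgY,
      lieBracket_congr hEfX (Filter.EventuallyEq.refl _ _)]
    rw [bracket_smul f g X Y x hf hg hXd hYd,
      bracket_smul (fun y => f y * μ y) (fun y => g y * ν y) X Y x (hf.mul hμd) (hg.mul hνd)
        hXd hYd,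
      bracket_smul f (fun y => g y * ν y) X Y x hf (hg.mul hνd) hXd hYd,
      bracket_smul (fun y => f y * μ y) g X Y x (hf.mul hμd) hg hXd hYd,
      fderiv_fun_mul hf hμd, fderiv_fun_mul hg hνd]
    simp only [ContinuousLinearMap.add_apply, ContinuousLinearMap.smul_apply, smul_eq_mul,
      map_add, map_sub, map_smul, ha, hb, hT0, ← hBv, ← hp, ← hq]
    module
  have hXone : X = fun y => (1 : ℝ) • X y := by funext y; rw [one_smul]
  have hYone : Y = fun y => (1 : ℝ) • Y y := by funext y; rw [one_smul]
  have T00 : nijenhuisTorsion L X Y x = T0 := by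
    have h := key (fun _ => (1 : ℝ)) (fun _ => (1 : ℝ))
      (differentiableAt_const _) (differentiableAt_const _)
    rw [← hXone, ← hYone] at h
    simpa using h
  have Tab : nijenhuisTorsion L (opVec L X) (opVec L Y) x = (μ x * ν x) • T0 := by
    rw [nij_congr hEX hEY, key μ ν hμd hνd]
  have T0b : nijenhuisTorsion L X (opVec L Y) x = ν x • T0 := by
    rw [nij_congr (Filter.EventuallyEq.refl _ X) hEY]
    have h := key (fun _ => (1 : ℝ)) ν (differentiableAt_const _) hνd
    rw [← hXone] at h
    simpa using h
  have Ta0 : nijenhuisTorsion L (opVec L X) Y x = μ x • T0 := by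
    rw [nij_congr hEX (Filter.EventuallyEq.refl _ Y)]
    have h := key μ (fun _ => (1 : ℝ)) hμd (differentiableAt_const _)
    rw [← hYone] at h
    simpa using h
  show L x (L x (nijenhuisTorsion L X Y x)) + nijenhuisTorsion L (opVec L X) (opVec L Y) x
      - L x (nijenhuisTorsion L X (opVec L Y) x + nijenhuisTorsion L (opVec L X) Y x) = _
  rw [T00, Tab, T0b, Ta0, hT0]
  simp only [pow_two, ContinuousLinearMap.mul_apply, ContinuousLinearMap.sub_apply,
    ContinuousLinearMap.smul_apply, ContinuousLinearMap.one_apply,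
    map_add, map_sub, map_smul, ha, hb, ← hBv]
  module
end

section
/- Let U ⊆ E be open in a finite-dimensional real normed space, L : U → (E →L[ℝ] E) a smooth field of operators, μ : U → ℝ smooth with pointwise Riesz index 1, i.e. ker(L(x) − μ(x)I)² = ker(L(x) − μ(x)I) for every x ∈ U. Let X, Y be smooth vector fields with L(x)X(x) = μ(x)X(x) and L(x)Y(x) = μ(x)Y(x) for all x. Then H_L(X,Y) = 0 on U if and only if the bracket [X,Y] is again a μ-eigenvector field, i.e. L(x)[X,Y](x) = μ(x)[X,Y](x) for all x ∈ U. (Paper: Proposition 3.5 in the case of a proper eigen-distribution, Riesz index ρ_μ = 1.) -/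
variable {E : Type*} [NormedAddCommGroup E] [NormedSpace ℝ E]

open Filter Topology

lemma fderiv_smulVec {f : E → ℝ} {X : E → E} {x : E}
    (hf : DifferentiableAt ℝ f x) (hX : DifferentiableAt ℝ X x) (v : E) :
    fderiv ℝ (fun y => f y • X y) x v = fderiv ℝ f x v • X x + f x • fderiv ℝ X x v := by
  rw [fderiv_fun_smul hf hX]
  simp [ContinuousLinearMap.smulRight_apply]
  abel

lemma lieBracket_congr_s8 {X₁ X₂ Y₁ Y₂ : E → E} {x : E}
    (hX : X₁ =ᶠ[𝓝 x] X₂) (hY : Y₁ =ᶠ[𝓝 x] Y₂) :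
    lieBracket X₁ Y₁ x = lieBracket X₂ Y₂ x := by
  unfold lieBracket
  rw [hX.fderiv_eq, hY.fderiv_eq, hX.eq_of_nhds, hY.eq_of_nhds]

lemma lieBracket_smul_smul {f g : E → ℝ} {X Y : E → E} {x : E}
    (hf : DifferentiableAt ℝ f x) (hg : DifferentiableAt ℝ g x)
    (hX : DifferentiableAt ℝ X x) (hY : DifferentiableAt ℝ Y x) :
    lieBracket (fun y => f y • X y) (fun y => g y • Y y) x
      = (f x * g x) • lieBracket X Y x
        + (f x * fderiv ℝ g x (X x)) • Y x
        - (g x * fderiv ℝ f x (Y x)) • X x := by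
  unfold lieBracket
  rw [fderiv_smulVec hg hY, fderiv_smulVec hf hX]
  simp only [map_smul, smul_eq_mul]
  module

lemma torsion_formula {L : E → (E →L[ℝ] E)} {μ : E → ℝ} {X Y X' Y' : E → E}
    {f g : E → ℝ} {x : E}
    (hX' : X' =ᶠ[𝓝 x] fun y => f y • X y)
    (hY' : Y' =ᶠ[𝓝 x] fun y => g y • Y y)
    (hXe : ∀ᶠ y in 𝓝 x, L y (X y) = μ y • X y)
    (hYe : ∀ᶠ y in 𝓝 x, L y (Y y) = μ y • Y y)
    (hf : DifferentiableAt ℝ f x) (hg : DifferentiableAt ℝ g x)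
    (hμ : DifferentiableAt ℝ μ x)
    (hX : DifferentiableAt ℝ X x) (hY : DifferentiableAt ℝ Y x) :
    nijenhuisTorsion L X' Y' x
      = (f x * g x) • (L x (L x (lieBracket X Y x))
          - (2 * μ x) • L x (lieBracket X Y x)
          + (μ x * μ x) • lieBracket X Y x) := by
  have e1 : opVec L X' =ᶠ[𝓝 x] fun y => (f y * μ y) • X y := by
    filter_upwards [hX', hXe] with y h1 h2
    simp only [opVec, h1, map_smul, h2, smul_smul]
  have e2 : opVec L Y' =ᶠ[𝓝 x] fun y => (g y * μ y) • Y y := by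
    filter_upwards [hY', hYe] with y h1 h2
    simp only [opVec, h1, map_smul, h2, smul_smul]
  have dfμ : ∀ v, fderiv ℝ (fun y => f y * μ y) x v
      = f x * fderiv ℝ μ x v + μ x * fderiv ℝ f x v := by
    intro v; rw [fderiv_fun_mul hf hμ]; simp [smul_eq_mul]
  have dgμ : ∀ v, fderiv ℝ (fun y => g y * μ y) x v
      = g x * fderiv ℝ μ x v + μ x * fderiv ℝ g x v := by
    intro v; rw [fderiv_fun_mul hg hμ]; simp [smul_eq_mul]
  have B1 := lieBracket_congr_s8 hX' hY'
  have B2 := lieBracket_congr_s8 e1 e2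
  have B3 := lieBracket_congr_s8 hX' e2
  have B4 := lieBracket_congr_s8 e1 hY'
  have H1 := lieBracket_smul_smul hf hg hX hY
  have H2 := lieBracket_smul_smul (hf.fun_mul hμ) (hg.fun_mul hμ) hX hY
  have H3 := lieBracket_smul_smul hf (hg.fun_mul hμ) hX hY
  have H4 := lieBracket_smul_smul (hf.fun_mul hμ) hg hX hY
  rw [dgμ (X x), dfμ (Y x)] at H2
  rw [dgμ (X x)] at H3
  rw [dfμ (Y x)] at H4
  have hLX := hXe.self_of_nhds
  have hLY := hYe.self_of_nhds
  unfold nijenhuisTorsion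
  rw [B1, B2, B3, B4, H1, H2, H3, H4]
  simp only [map_add, map_sub, map_smul, hLX, hLY, smul_smul]
  module

lemma sq_expand (L : E →L[ℝ] E) (m : ℝ) (v : E) :
    ((L - m • (1 : E →L[ℝ] E)) ^ 2) v
      = L (L v) - (2 * m) • L v + (m * m) • v := by
  rw [pow_two, ContinuousLinearMap.mul_apply]
  simp only [ContinuousLinearMap.sub_apply, ContinuousLinearMap.smul_apply,
    ContinuousLinearMap.one_apply, map_sub, map_smul]
  module

/-- Paper, Proposition 3.5, Riesz index 1: let `μ` have pointwise
Riesz index 1, i.e. `ker(L(x) − μ(x)I)² = ker(L(x) − μ(x)I)`, and let `X`, `Y` be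
`μ`-eigenvector fields. Then `H_L(X,Y) = 0` on `U` iff `[X,Y]` is again a
`μ`-eigenvector field on `U`. -/
theorem haantjes_vanish_iff_bracket_eigen {E : Type*}
    [NormedAddCommGroup E] [NormedSpace ℝ E] [FiniteDimensional ℝ E]
    (U : Set E) (hU : IsOpen U)
    (L : E → (E →L[ℝ] E)) (hL : ContDiffOn ℝ (⊤ : ℕ∞) L U)
    (μ : E → ℝ) (hμ : ContDiffOn ℝ (⊤ : ℕ∞) μ U)
    (hRiesz : ∀ x ∈ U, ∀ v : E,
      ((L x - μ x • (1 : E →L[ℝ] E)) ^ 2) v = 0 ↔ (L x - μ x • (1 : E →L[ℝ] E)) v = 0)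
    (X Y : E → E) (hX : ContDiffOn ℝ (⊤ : ℕ∞) X U) (hY : ContDiffOn ℝ (⊤ : ℕ∞) Y U)
    (hXeig : ∀ x ∈ U, L x (X x) = μ x • X x)
    (hYeig : ∀ x ∈ U, L x (Y x) = μ x • Y x) :
    (∀ x ∈ U, haantjesTensor L X Y x = 0)
      ↔ (∀ x ∈ U, L x (lieBracket X Y x) = μ x • lieBracket X Y x) := by
  -- Key pointwise computation: H_L(X,Y)(x) = (L x − μ x)⁴ [X,Y](x).
  have key : ∀ x ∈ U, haantjesTensor L X Y x
      = ((L x - μ x • (1 : E →L[ℝ] E)) ^ 4) (lieBracket X Y x) := by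
    intro x hx
    have hUx : U ∈ 𝓝 x := hU.mem_nhds hx
    have hXd : DifferentiableAt ℝ X x :=
      (hX.contDiffAt hUx).differentiableAt (by simp)
    have hYd : DifferentiableAt ℝ Y x :=
      (hY.contDiffAt hUx).differentiableAt (by simp)
    have hμd : DifferentiableAt ℝ μ x :=
      (hμ.contDiffAt hUx).differentiableAt (by simp)
    have h1d : DifferentiableAt ℝ (fun _ : E => (1 : ℝ)) x := differentiableAt_const _
    have hXe : ∀ᶠ y in 𝓝 x, L y (X y) = μ y • X y := eventually_of_mem hUx hXeig
    have hYe : ∀ᶠ y in 𝓝 x, L y (Y y) = μ y • Y y := eventually_of_mem hUx hYeig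
    have hX1 : X =ᶠ[𝓝 x] fun y => (1 : ℝ) • X y := by
      filter_upwards with y; simp
    have hY1 : Y =ᶠ[𝓝 x] fun y => (1 : ℝ) • Y y := by
      filter_upwards with y; simp
    have hXμ : opVec L X =ᶠ[𝓝 x] fun y => μ y • X y := hXe
    have hYμ : opVec L Y =ᶠ[𝓝 x] fun y => μ y • Y y := hYe
    set b := lieBracket X Y x with hb
    set P := L x (L x b) - (2 * μ x) • L x b + (μ x * μ x) • b with hP
    have T1 : nijenhuisTorsion L X Y x = ((1 : ℝ) * 1) • P :=
      torsion_formula hX1 hY1 hXe hYe h1d h1d hμd hXd hYd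
    have T2 : nijenhuisTorsion L (opVec L X) (opVec L Y) x = (μ x * μ x) • P :=
      torsion_formula hXμ hYμ hXe hYe hμd hμd hμd hXd hYd
    have T3 : nijenhuisTorsion L X (opVec L Y) x = ((1 : ℝ) * μ x) • P :=
      torsion_formula hX1 hYμ hXe hYe h1d hμd hμd hXd hYd
    have T4 : nijenhuisTorsion L (opVec L X) Y x = (μ x * (1 : ℝ)) • P :=
      torsion_formula hXμ hY1 hXe hYe hμd h1d hμd hXd hYd
    have hPA : P = ((L x - μ x • (1 : E →L[ℝ] E)) ^ 2) b := (sq_expand _ _ _).symm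
    have h4 : ((L x - μ x • (1 : E →L[ℝ] E)) ^ 4) b
        = ((L x - μ x • (1 : E →L[ℝ] E)) ^ 2) (((L x - μ x • (1 : E →L[ℝ] E)) ^ 2) b) := by
      rw [show (4 : ℕ) = 2 + 2 from rfl, pow_add, ContinuousLinearMap.mul_apply]
    show L x (L x (nijenhuisTorsion L X Y x)) + nijenhuisTorsion L (opVec L X) (opVec L Y) x
      - L x (nijenhuisTorsion L X (opVec L Y) x + nijenhuisTorsion L (opVec L X) Y x) = _
    rw [T1, T2, T3, T4, h4, ← hPA, sq_expand]
    simp only [map_add, map_sub, map_smul, one_mul, mul_one, one_smul]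
    module
  constructor
  · intro h x hx
    have hR := hRiesz x hx
    set A := L x - μ x • (1 : E →L[ℝ] E) with hA
    set b := lieBracket X Y x with hb
    have h0 : (A ^ 4) b = 0 := by rw [← key x hx]; exact h x hx
    have h4 : (A ^ 4) b = (A ^ 2) ((A ^ 2) b) := by
      rw [show (4 : ℕ) = 2 + 2 from rfl, pow_add, ContinuousLinearMap.mul_apply]
    have h3 : A ((A ^ 2) b) = (A ^ 2) (A b) := by
      simp only [pow_two, ContinuousLinearMap.mul_apply]
    have s1 : A ((A ^ 2) b) = 0 := (hR _).mp (h4 ▸ h0)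
    have s2 : A (A b) = 0 := (hR _).mp (h3 ▸ s1)
    have s3 : (A ^ 2) b = 0 := by rw [pow_two, ContinuousLinearMap.mul_apply]; exact s2
    have s4 : A b = 0 := (hR _).mp s3
    have : L x b - μ x • b = 0 := by
      simpa [hA, ContinuousLinearMap.sub_apply, ContinuousLinearMap.smul_apply,
        ContinuousLinearMap.one_apply] using s4
    exact sub_eq_zero.mp this
  · intro h x hx
    set A := L x - μ x • (1 : E →L[ℝ] E) with hA
    set b := lieBracket X Y x with hb
    have s4 : A b = 0 := by
      simp only [hA, ContinuousLinearMap.sub_apply, ContinuousLinearMap.smul_apply,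
        ContinuousLinearMap.one_apply, hb, h x hx, sub_self]
    have : (A ^ 4) b = 0 := by
      rw [show (4 : ℕ) = 3 + 1 from rfl, pow_succ, ContinuousLinearMap.mul_apply, s4, map_zero]
    rw [key x hx]
    exact this
end

section
/- Let U ⊆ E be open in a finite-dimensional real normed space, L : U → (E →L[ℝ] E) a smooth field of operators, μ, ν : U → ℝ smooth with μ(x) ≠ ν(x) for all x ∈ U, and X, Y smooth vector fields with L(x)X(x) = μ(x)X(x) and L(x)Y(x) = ν(x)Y(x) for all x. If H_L(X,Y) = 0 on U, then at every x ∈ U the bracket satisfies [X,Y](x) ∈ ker(L(x) − μ(x)I)² + ker(L(x) − ν(x)I)². (Paper: Lemma 3.7 / Proposition 3.8 specialized to proper eigenvector fields with distinct eigenvalues.) -/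
variable {E : Type*} [NormedAddCommGroup E] [NormedSpace ℝ E]

/-- Lie bracket of fields that locally are scalar multiples of given fields. -/
lemma lieBracket_eventually_smul {f g : E → ℝ} {X Y X' Y' : E → E} {x : E}
    (hf : DifferentiableAt ℝ f x) (hg : DifferentiableAt ℝ g x)
    (hX : DifferentiableAt ℝ X x) (hY : DifferentiableAt ℝ Y x)
    (hX' : X' =ᶠ[nhds x] fun y => f y • X y) (hY' : Y' =ᶠ[nhds x] fun y => g y • Y y) :
    lieBracket X' Y' x = (f x * g x) • lieBracket X Y x
      + (f x * fderiv ℝ g x (X x)) • Y x - (g x * fderiv ℝ f x (Y x)) • X x := by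
  unfold lieBracket
  rw [hX'.fderiv_eq, hY'.fderiv_eq, hX'.eq_of_nhds, hY'.eq_of_nhds,
    fderiv_fun_smul hf hX, fderiv_fun_smul hg hY]
  simp only [ContinuousLinearMap.add_apply, ContinuousLinearMap.coe_smul',
    Pi.smul_apply, ContinuousLinearMap.smulRight_apply, map_smul, smul_eq_mul]
  module

/-- The Nijenhuis torsion on (local) eigenvector fields. -/
lemma nijenhuisTorsion_eigen {L : E → (E →L[ℝ] E)} {μ ν : E → ℝ} {X Y : E → E} {x : E}
    (hμ : DifferentiableAt ℝ μ x) (hν : DifferentiableAt ℝ ν x)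
    (hX : DifferentiableAt ℝ X x) (hY : DifferentiableAt ℝ Y x)
    (hXe : opVec L X =ᶠ[nhds x] fun y => μ y • X y)
    (hYe : opVec L Y =ᶠ[nhds x] fun y => ν y • Y y) :
    nijenhuisTorsion L X Y x =
      L x (L x (lieBracket X Y x)) - (μ x + ν x) • L x (lieBracket X Y x)
        + (μ x * ν x) • lieBracket X Y x
        + (μ x - ν x) • ((fderiv ℝ ν x (X x)) • Y x + (fderiv ℝ μ x (Y x)) • X x) := by
  have hX1 : X =ᶠ[nhds x] fun y => (fun _ : E => (1:ℝ)) y • X y :=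
    Filter.Eventually.of_forall fun y => by simp
  have hY1 : Y =ᶠ[nhds x] fun y => (fun _ : E => (1:ℝ)) y • Y y :=
    Filter.Eventually.of_forall fun y => by simp
  have h2 := lieBracket_eventually_smul hμ hν hX hY hXe hYe
  have h3 := lieBracket_eventually_smul (differentiableAt_const (1:ℝ)) hν hX hY hX1 hYe
  have h4 := lieBracket_eventually_smul hμ (differentiableAt_const (1:ℝ)) hX hY hXe hY1
  have hA : L x (X x) = μ x • X x := hXe.eq_of_nhds
  have hB : L x (Y x) = ν x • Y x := hYe.eq_of_nhds
  simp only [nijenhuisTorsion]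
  rw [h2, h3, h4]
  simp only [fderiv_const_apply, ContinuousLinearMap.zero_apply, one_mul, mul_zero,
    zero_smul, sub_zero, map_add, map_sub, map_smul, map_zero, mul_one, hA, hB, smul_smul]
  module

/-- Paper, Lemma 3.7 / Proposition 3.8, proper eigenvector fields with
distinct eigenvalues: if `LX = μX`, `LY = νY` with `μ(x) ≠ ν(x)` on `U` and the Haantjes
tensor `H_L(X,Y)` vanishes on `U`, then at every `x ∈ U`
`[X,Y](x) ∈ ker(L(x) − μ(x)I)² + ker(L(x) − ν(x)I)²`. -/
theorem bracket_mem_sum_generalized_eigenspaces {E : Type*}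
    [NormedAddCommGroup E] [NormedSpace ℝ E] [FiniteDimensional ℝ E]
    (U : Set E) (hU : IsOpen U)
    (L : E → (E →L[ℝ] E)) (hL : ContDiffOn ℝ (⊤ : ℕ∞) L U)
    (μ ν : E → ℝ) (hμ : ContDiffOn ℝ (⊤ : ℕ∞) μ U) (hν : ContDiffOn ℝ (⊤ : ℕ∞) ν U)
    (hμν : ∀ x ∈ U, μ x ≠ ν x)
    (X Y : E → E) (hX : ContDiffOn ℝ (⊤ : ℕ∞) X U) (hY : ContDiffOn ℝ (⊤ : ℕ∞) Y U)
    (hXeig : ∀ x ∈ U, L x (X x) = μ x • X x)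
    (hYeig : ∀ x ∈ U, L x (Y x) = ν x • Y x)
    (hHaan : ∀ x ∈ U, haantjesTensor L X Y x = 0) :
    ∀ x ∈ U,
      lieBracket X Y x ∈
        LinearMap.ker (((L x - μ x • (1 : E →L[ℝ] E)) ^ 2 : E →L[ℝ] E) : E →ₗ[ℝ] E)
          ⊔ LinearMap.ker (((L x - ν x • (1 : E →L[ℝ] E)) ^ 2 : E →L[ℝ] E) : E →ₗ[ℝ] E) := by
  intro x hx
  have hxU : U ∈ nhds x := hU.mem_nhds hx
  have dL : DifferentiableAt ℝ L x := (hL.contDiffAt hxU).differentiableAt (by simp)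
  have dμ : DifferentiableAt ℝ μ x := (hμ.contDiffAt hxU).differentiableAt (by simp)
  have dν : DifferentiableAt ℝ ν x := (hν.contDiffAt hxU).differentiableAt (by simp)
  have dX : DifferentiableAt ℝ X x := (hX.contDiffAt hxU).differentiableAt (by simp)
  have dY : DifferentiableAt ℝ Y x := (hY.contDiffAt hxU).differentiableAt (by simp)
  have dLX : DifferentiableAt ℝ (opVec L X) x := dL.clm_apply dX
  have dLY : DifferentiableAt ℝ (opVec L Y) x := dL.clm_apply dY
  have hXe : opVec L X =ᶠ[nhds x] fun y => μ y • X y := by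
    filter_upwards [hxU] with y hy using hXeig y hy
  have hYe : opVec L Y =ᶠ[nhds x] fun y => ν y • Y y := by
    filter_upwards [hxU] with y hy using hYeig y hy
  have hXe2 : opVec L (opVec L X) =ᶠ[nhds x] fun y => μ y • opVec L X y := by
    filter_upwards [hxU] with y hy
    show L y (L y (X y)) = μ y • L y (X y)
    rw [hXeig y hy, map_smul, hXeig y hy]
  have hYe2 : opVec L (opVec L Y) =ᶠ[nhds x] fun y => ν y • opVec L Y y := by
    filter_upwards [hxU] with y hy
    show L y (L y (Y y)) = ν y • L y (Y y)
    rw [hYeig y hy, map_smul, hYeig y hy]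
  have hX1 : X =ᶠ[nhds x] fun y => (fun _ : E => (1:ℝ)) y • X y :=
    Filter.Eventually.of_forall fun y => by simp
  have hY1 : Y =ᶠ[nhds x] fun y => (fun _ : E => (1:ℝ)) y • Y y :=
    Filter.Eventually.of_forall fun y => by simp
  have hA : L x (X x) = μ x • X x := hXeig x hx
  have hB : L x (Y x) = ν x • Y x := hYeig x hx
  have hpX : opVec L X x = μ x • X x := hA
  have hpY : opVec L Y x = ν x • Y x := hB
  -- torsion formulas
  have hT1 := nijenhuisTorsion_eigen dμ dν dX dY hXe hYe
  have hT2 := nijenhuisTorsion_eigen dμ dν dLX dLY hXe2 hYe2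
  have hT3 := nijenhuisTorsion_eigen dμ dν dX dLY hXe hYe2
  have hT4 := nijenhuisTorsion_eigen dμ dν dLX dY hXe2 hYe
  -- bracket formulas
  have hZ2 := lieBracket_eventually_smul dμ dν dX dY hXe hYe
  have hZ3 := lieBracket_eventually_smul (differentiableAt_const (1:ℝ)) dν dX dY hX1 hYe
  have hZ4 := lieBracket_eventually_smul dμ (differentiableAt_const (1:ℝ)) dX dY hXe hY1
  set P : E →L[ℝ] E := L x - μ x • (1 : E →L[ℝ] E) with hP
  set Q : E →L[ℝ] E := L x - ν x • (1 : E →L[ℝ] E) with hQ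
  set Z : E := lieBracket X Y x with hZ
  -- the key identity: H_L(X,Y)(x) = (P² Q²) Z
  have hKey : ((P ^ 2) * (Q ^ 2)) Z = 0 := by
    rw [← hHaan x hx]
    simp only [haantjesTensor]
    rw [hT1, hT2, hT3, hT4, hZ2, hZ3, hZ4, hpX, hpY]
    simp only [hP, hQ, pow_two, ContinuousLinearMap.mul_apply, ContinuousLinearMap.sub_apply,
      ContinuousLinearMap.coe_smul', Pi.smul_apply, ContinuousLinearMap.one_apply,
      fderiv_const_apply, ContinuousLinearMap.zero_apply, map_add, map_sub, map_smul,
      smul_add, smul_sub, smul_smul, hA, hB, one_mul, mul_one, mul_zero, zero_smul,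
      sub_zero, map_zero, smul_eq_mul]
    module
  have hδ : (μ x - ν x) ≠ 0 := sub_ne_zero.2 (hμν x hx)
  -- Bezout-type decomposition: (Q-3P)Q² + (3Q-P)P² = (μ-ν)³ • 1 applied to Z
  set w₁ : E := ((Q - (3:ℝ) • P) * Q ^ 2) Z with hw₁
  set w₂ : E := (((3:ℝ) • Q - P) * P ^ 2) Z with hw₂
  have hmemP : w₁ ∈ LinearMap.ker ((P ^ 2 : E →L[ℝ] E) : E →ₗ[ℝ] E) := by
    rw [LinearMap.mem_ker]
    have hc : (P ^ 2) * ((Q - (3:ℝ) • P) * Q ^ 2) = (Q - (3:ℝ) • P) * ((P ^ 2) * (Q ^ 2)) := by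
      ext w
      simp only [hP, hQ, pow_two, ContinuousLinearMap.mul_apply, ContinuousLinearMap.sub_apply,
        ContinuousLinearMap.coe_smul', Pi.smul_apply, ContinuousLinearMap.one_apply,
        map_sub, map_smul, smul_sub, smul_smul]
      module
    calc (P ^ 2) w₁ = ((P ^ 2) * ((Q - (3:ℝ) • P) * Q ^ 2)) Z := rfl
      _ = ((Q - (3:ℝ) • P) * ((P ^ 2) * (Q ^ 2))) Z := by rw [hc]
      _ = (Q - (3:ℝ) • P) (((P ^ 2) * (Q ^ 2)) Z) := rfl
      _ = 0 := by rw [hKey, map_zero]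
  have hmemQ : w₂ ∈ LinearMap.ker ((Q ^ 2 : E →L[ℝ] E) : E →ₗ[ℝ] E) := by
    rw [LinearMap.mem_ker]
    have hc : (Q ^ 2) * (((3:ℝ) • Q - P) * P ^ 2) = ((3:ℝ) • Q - P) * ((P ^ 2) * (Q ^ 2)) := by
      ext w
      simp only [hP, hQ, pow_two, ContinuousLinearMap.mul_apply, ContinuousLinearMap.sub_apply,
        ContinuousLinearMap.coe_smul', Pi.smul_apply, ContinuousLinearMap.one_apply,
        map_sub, map_smul, smul_sub, smul_smul]
      module
    calc (Q ^ 2) w₂ = ((Q ^ 2) * (((3:ℝ) • Q - P) * P ^ 2)) Z := rfl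
      _ = (((3:ℝ) • Q - P) * ((P ^ 2) * (Q ^ 2))) Z := by rw [hc]
      _ = ((3:ℝ) • Q - P) (((P ^ 2) * (Q ^ 2)) Z) := rfl
      _ = 0 := by rw [hKey, map_zero]
  have hsum : ((μ x - ν x) ^ 3) • Z = w₁ + w₂ := by
    simp only [hw₁, hw₂, hP, hQ, pow_two, ContinuousLinearMap.mul_apply,
      ContinuousLinearMap.sub_apply, ContinuousLinearMap.coe_smul', Pi.smul_apply,
      ContinuousLinearMap.one_apply, map_sub, map_smul, smul_sub, smul_smul]
    ring_nf
    module
  refine Submodule.mem_sup.2 ⟨((μ x - ν x) ^ 3)⁻¹ • w₁, ?_, ((μ x - ν x) ^ 3)⁻¹ • w₂, ?_, ?_⟩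
  · exact Submodule.smul_mem _ _ hmemP
  · exact Submodule.smul_mem _ _ hmemQ
  · rw [← smul_add, ← hsum, smul_smul, inv_mul_cancel₀ (pow_ne_zero 3 hδ), one_smul]
end

section
/- Let Ω be an invertible skew-symmetric real 2n×2n matrix and K a real 2n×2n matrix with KᵀΩ = ΩK. Then for every λ ∈ ℝ and every m ∈ ℕ, the dimension of ker(K − λI)ᵐ is even. In particular, every real eigenvalue of K has even geometric multiplicity (dim ker(K − λI)) and even algebraic multiplicity (dim ker(K − λI)^{2n}). (Paper: Corollary 4.3.) -/
open Matrix

/-- A real skew-symmetric matrix has even rank. -/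
lemma even_finrank_range_of_skew {N : ℕ} (S : Matrix (Fin N) (Fin N) ℝ)
    (hS : Sᵀ = -S) :
    Even (Module.finrank ℝ (LinearMap.range (Matrix.toLin' S))) := by
  classical
  set T := Matrix.toLin' S with hT
  set R := LinearMap.range T with hR
  set d := Module.finrank ℝ R with hd
  -- basis of the range
  let b : Module.Basis (Fin d) ℝ R := Module.finBasis ℝ R
  let c : Fin d → (Fin N → ℝ) := fun i => (b i : Fin N → ℝ)
  -- key skew-pairing facts
  have hdot : ∀ (x y : Fin N → ℝ), x ⬝ᵥ (S *ᵥ y) = -((S *ᵥ x) ⬝ᵥ y) := by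
    intro x y
    rw [dotProduct_mulVec, ← mulVec_transpose, hS, neg_mulVec, neg_dotProduct]
  set P : Matrix (Fin d) (Fin d) ℝ := fun i j => c i ⬝ᵥ (S *ᵥ c j) with hP
  have hPskew : Pᵀ = -P := by
    ext i j
    simp only [transpose_apply, Matrix.neg_apply]; simp only [hP]
    rw [hdot, dotProduct_comm]
  -- kernel ∩ range = 0
  have hkerrange : ∀ x : Fin N → ℝ, x ∈ R → S *ᵥ x = 0 → x = 0 := by
    intro x hx hSx
    obtain ⟨y, hy⟩ := hx
    have : x ⬝ᵥ x = 0 := by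
      have hxy : x = S *ᵥ y := by
        rw [← hy]; rfl
      calc x ⬝ᵥ x = x ⬝ᵥ (S *ᵥ y) := by rw [← hxy]
        _ = -((S *ᵥ x) ⬝ᵥ y) := hdot x y
        _ = 0 := by rw [hSx, zero_dotProduct, neg_zero]
    exact dotProduct_self_eq_zero.mp this
  -- P is injective
  have hPinj : Function.Injective P.mulVec := by
    have : ∀ v, P *ᵥ v = 0 → v = 0 := by
      intro v hv
      set x : Fin N → ℝ := ∑ j, v j • c j with hx
      have hxR : x ∈ R := by
        rw [hx]
        exact Submodule.sum_mem _ fun j _ => Submodule.smul_mem _ _ (SetLike.coe_mem (b j))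
      have dp_sum : ∀ (w : Fin N → ℝ) (f : Fin d → Fin N → ℝ),
          w ⬝ᵥ (∑ i, f i) = ∑ i, w ⬝ᵥ f i := by
        intro w f
        simp only [dotProduct, Finset.sum_apply, Finset.mul_sum]
        rw [Finset.sum_comm]
      have sum_dp : ∀ (w : Fin N → ℝ) (f : Fin d → Fin N → ℝ),
          (∑ i, f i) ⬝ᵥ w = ∑ i, f i ⬝ᵥ w := by
        intro w f
        simp only [dotProduct, Finset.sum_apply, Finset.sum_mul]
        rw [Finset.sum_comm]
      have mv_sum : S *ᵥ x = ∑ j, v j • (S *ᵥ c j) := by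
        rw [hx]
        have : S *ᵥ (∑ j, v j • c j) = S.mulVecLin (∑ j, v j • c j) := rfl
        rw [this, map_sum]
        simp [Matrix.mulVecLin_apply]
      have hpair : ∀ i, c i ⬝ᵥ (S *ᵥ x) = (P *ᵥ v) i := by
        intro i
        rw [mv_sum, dp_sum]
        simp only [dotProduct_smul, smul_eq_mul]
        simp [Matrix.mulVec, dotProduct, hP, mul_comm]
      -- S *ᵥ x ∈ R, and ⟂ to all c i, hence to itself
      have hSxR : S *ᵥ x ∈ R := ⟨x, rfl⟩
      have hSx : S *ᵥ x = 0 := by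
        have hrepr : (S *ᵥ x) = ∑ k, (b.repr ⟨S *ᵥ x, hSxR⟩) k • c k := by
          have h1 := b.sum_repr ⟨S *ᵥ x, hSxR⟩
          calc S *ᵥ x = ((⟨S *ᵥ x, hSxR⟩ : R) : Fin N → ℝ) := rfl
            _ = ((∑ i, (b.repr ⟨S *ᵥ x, hSxR⟩) i • b i : R) : Fin N → ℝ) := by rw [h1]
            _ = ∑ k, (b.repr ⟨S *ᵥ x, hSxR⟩) k • c k := by
                push_cast
                rfl
        have : (S *ᵥ x) ⬝ᵥ (S *ᵥ x) = 0 := by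
          conv_lhs => rw [hrepr]
          rw [sum_dp]
          refine Finset.sum_eq_zero fun k _ => ?_
          rw [smul_dotProduct, ← hrepr, hpair k, hv]
          simp
        exact dotProduct_self_eq_zero.mp this
      have hx0 : x = 0 := hkerrange x hxR hSx
      -- linear independence
      have hb : LinearIndependent ℝ c := b.linearIndependent.map' R.subtype (Submodule.ker_subtype R)
      exact Fintype.linearIndependent_iff.mp hb v (by rw [← hx]; exact hx0) |> funext
    intro u w huw
    have := this (u - w) (by rw [Matrix.mulVec_sub, huw, sub_self])
    exact sub_eq_zero.mp this
  have hPunit : IsUnit P := Matrix.mulVec_injective_iff_isUnit.mp hPinj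
  have hdet : P.det ≠ 0 := by
    have := (Matrix.isUnit_iff_isUnit_det P).mp hPunit
    exact this.ne_zero
  -- determinant parity argument
  have : P.det = (-1 : ℝ) ^ d * P.det := by
    conv_lhs => rw [← Matrix.det_transpose, hPskew, Matrix.det_neg]
    simp
  have hpow : (-1 : ℝ) ^ d = 1 := by
    have := mul_right_cancel₀ hdet (by linarith [this] : (1 : ℝ) * P.det = (-1 : ℝ) ^ d * P.det)
    linarith
  exact (neg_one_pow_eq_one_iff_even (by norm_num : (-1 : ℝ) ≠ 1)).mp hpow

lemma even_finrank_ker_of_skew {n : ℕ} (S : Matrix (Fin (2 * n)) (Fin (2 * n)) ℝ)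
    (hS : Sᵀ = -S) :
    Even (Module.finrank ℝ (LinearMap.ker (Matrix.toLin' S))) := by
  have h1 := even_finrank_range_of_skew S hS
  have h2 : Module.finrank ℝ (LinearMap.range (Matrix.toLin' S)) +
      Module.finrank ℝ (LinearMap.ker (Matrix.toLin' S)) = 2 * n := by
    rw [LinearMap.finrank_range_add_finrank_ker]
    simp [Module.finrank_pi]
  have : Even (Module.finrank ℝ (LinearMap.range (Matrix.toLin' S)) +
      Module.finrank ℝ (LinearMap.ker (Matrix.toLin' S))) := by
    rw [h2]; exact even_two_mul n
  exact (Nat.even_add.mp this).mp h1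

/-- Paper, Corollary 4.3: if `Ω` is an invertible skew-symmetric
`2n×2n` real matrix and `KᵀΩ = ΩK`, then for every `λ ∈ ℝ` and `m ∈ ℕ` the dimension of
`ker(K − λI)ᵐ` is even; in particular every real eigenvalue of `K` has even geometric
multiplicity and even algebraic multiplicity. -/
theorem even_dim_generalized_eigenspaces {n : ℕ} (Ω K : Matrix (Fin (2 * n)) (Fin (2 * n)) ℝ)
    (hΩinv : IsUnit Ω) (hΩskew : Ωᵀ = -Ω)
    (hK : Kᵀ * Ω = Ω * K) :
    (∀ (lam : ℝ) (m : ℕ),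
      Even (Module.finrank ℝ
        (LinearMap.ker (Matrix.toLin' ((K - lam • (1 : Matrix (Fin (2 * n)) (Fin (2 * n)) ℝ)) ^ m))))) ∧
    (∀ lam : ℝ,
      Even (Module.finrank ℝ
        (LinearMap.ker (Matrix.toLin' (K - lam • (1 : Matrix (Fin (2 * n)) (Fin (2 * n)) ℝ))))) ∧
      Even (Module.finrank ℝ
        (LinearMap.ker (Matrix.toLin' ((K - lam • (1 : Matrix (Fin (2 * n)) (Fin (2 * n)) ℝ)) ^ (2 * n)))))) := by
  have main : ∀ (lam : ℝ) (m : ℕ),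
      Even (Module.finrank ℝ
        (LinearMap.ker (Matrix.toLin' ((K - lam • (1 : Matrix (Fin (2 * n)) (Fin (2 * n)) ℝ)) ^ m)))) := by
    intro lam m
    set A := K - lam • (1 : Matrix (Fin (2 * n)) (Fin (2 * n)) ℝ) with hA
    have hAcomm : Aᵀ * Ω = Ω * A := by
      rw [hA, Matrix.transpose_sub, Matrix.sub_mul, Matrix.mul_sub, hK]
      congr 1
      rw [Matrix.transpose_smul, Matrix.transpose_one, Matrix.smul_mul, Matrix.mul_smul,
        Matrix.one_mul, Matrix.mul_one]
    have hpow : ∀ m : ℕ, (Aᵀ) ^ m * Ω = Ω * A ^ m := by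
      intro m
      induction m with
      | zero => simp
      | succ k ih =>
        rw [pow_succ, pow_succ, Matrix.mul_assoc, hAcomm, ← Matrix.mul_assoc, ih,
          Matrix.mul_assoc]
    have hskew : (Ω * A ^ m)ᵀ = -(Ω * A ^ m) := by
      rw [Matrix.transpose_mul, Matrix.transpose_pow, hΩskew, Matrix.mul_neg, hpow]
    have heven := even_finrank_ker_of_skew (Ω * A ^ m) hskew
    -- ker (Ω * A^m) = ker (A^m)
    have hker : LinearMap.ker (Matrix.toLin' (Ω * A ^ m)) = LinearMap.ker (Matrix.toLin' (A ^ m)) := by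
      rw [Matrix.toLin'_mul, LinearMap.ker_comp]
      have : LinearMap.ker (Matrix.toLin' Ω) = ⊥ := by
        rw [LinearMap.ker_eq_bot]
        intro x y hxy
        exact Matrix.mulVec_injective_iff_isUnit.mpr hΩinv (by simpa [Matrix.toLin'_apply] using hxy)
      rw [this, Submodule.comap_bot]
    rwa [hker] at heven
  exact ⟨main, fun lam => ⟨by have := main lam 1; rwa [pow_one] at this, main lam (2 * n)⟩⟩
end

section
/- Let U ⊆ ℝ^{2n} be open, let K₀ = I and K₁,…,K_{n−1} : U → M_{2n}(ℝ) be smooth matrix-valued maps satisfying, at every x ∈ U, the compatibility K_α(x)ᵀJ = J K_α(x) and the commutativity K_α(x)K_β(x) = K_β(x)K_α(x) for all α, β ∈ {0,…,n−1}. Let H = H₁, H₂,…,Hₙ : U → ℝ be smooth functions forming a Lenard–Haantjes chain: ∇H_{α+1}(x) = K_α(x)ᵀ ∇H(x) for all x and α = 0,…,n−1. Then the functions are pairwise in involution: {H_i, H_j} = 0 on U for all i, j. (Paper: Theorem 5.1, first part — functions in a Lenard–Haantjes chain on an ωH manifold are in involution, hence the system is integrable by quadratures.) -/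
open Matrix

/-- Phase space `ℝ^{2n}` with coordinates indexed by `Fin n ⊕ Fin n`:
`Sum.inl i` is the `i`-th position-type coordinate and `Sum.inr i` the `i`-th
momentum-type coordinate. -/
abbrev Phase (n : ℕ) := (Fin n ⊕ Fin n) → ℝ

/-- Gradient (vector of partial derivatives) of a function on phase space. -/
noncomputable def grad {n : ℕ} (F : Phase n → ℝ) (x : Phase n) : Phase n :=
  fun s => fderiv ℝ F x (Pi.single s 1)

/-- Canonical Poisson bracket
`{F,G} = Σᵢ (∂F/∂qᵢ·∂G/∂pᵢ − ∂F/∂pᵢ·∂G/∂qᵢ)`. -/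
noncomputable def poisson {n : ℕ} (F G : Phase n → ℝ) (x : Phase n) : ℝ :=
  ∑ i : Fin n,
    (grad F x (Sum.inl i) * grad G x (Sum.inr i)
      - grad F x (Sum.inr i) * grad G x (Sum.inl i))

/-- The standard symplectic matrix `J = [[0, Iₙ], [−Iₙ, 0]]`. -/
def symplJ (n : ℕ) : Matrix (Fin n ⊕ Fin n) (Fin n ⊕ Fin n) ℝ :=
  Matrix.fromBlocks 0 1 (-1) 0

/-- Lie bracket of vector fields on phase space. -/
noncomputable def lieBracketP {n : ℕ} (X Y : Phase n → Phase n) : Phase n → Phase n :=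
  fun x => fderiv ℝ Y x (X x) - fderiv ℝ X x (Y x)

/-- The vector field `LX : x ↦ L(x)·X(x)` associated with a matrix-valued field `L`. -/
noncomputable def matVec {n : ℕ}
    (L : Phase n → Matrix (Fin n ⊕ Fin n) (Fin n ⊕ Fin n) ℝ)
    (X : Phase n → Phase n) : Phase n → Phase n :=
  fun x => (L x) *ᵥ (X x)

/-- Nijenhuis torsion of a matrix-valued field of operators on phase space:
`T_L(X,Y) = L²[X,Y] + [LX,LY] − L([X,LY] + [LX,Y])`. -/
noncomputable def nijenhuisTorsionP {n : ℕ}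
    (L : Phase n → Matrix (Fin n ⊕ Fin n) (Fin n ⊕ Fin n) ℝ)
    (X Y : Phase n → Phase n) : Phase n → Phase n :=
  fun x =>
    L x *ᵥ (L x *ᵥ lieBracketP X Y x) + lieBracketP (matVec L X) (matVec L Y) x
      - L x *ᵥ (lieBracketP X (matVec L Y) x + lieBracketP (matVec L X) Y x)

/-- Haantjes tensor of a matrix-valued field of operators on phase space:
`H_L(X,Y) = L²T_L(X,Y) + T_L(LX,LY) − L(T_L(X,LY) + T_L(LX,Y))`. -/
noncomputable def haantjesTensorP {n : ℕ}
    (L : Phase n → Matrix (Fin n ⊕ Fin n) (Fin n ⊕ Fin n) ℝ)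
    (X Y : Phase n → Phase n) : Phase n → Phase n :=
  fun x =>
    L x *ᵥ (L x *ᵥ nijenhuisTorsionP L X Y x)
      + nijenhuisTorsionP L (matVec L X) (matVec L Y) x
      - L x *ᵥ (nijenhuisTorsionP L X (matVec L Y) x
          + nijenhuisTorsionP L (matVec L X) Y x)


lemma symplJ_sq (n : ℕ) : symplJ n * symplJ n = -1 := by
  rw [symplJ, Matrix.fromBlocks_multiply]
  ext (i|i) (j|j) <;>
    simp [Matrix.fromBlocks_apply₁₁, Matrix.fromBlocks_apply₁₂,
      Matrix.fromBlocks_apply₂₁, Matrix.fromBlocks_apply₂₂, Matrix.one_apply]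

lemma symplJ_transpose (n : ℕ) : (symplJ n)ᵀ = -(symplJ n) := by
  rw [symplJ, Matrix.fromBlocks_transpose]
  ext (i|i) (j|j) <;>
    simp [Matrix.fromBlocks_apply₁₁, Matrix.fromBlocks_apply₁₂,
      Matrix.fromBlocks_apply₂₁, Matrix.fromBlocks_apply₂₂]

lemma poisson_eq_dot {n : ℕ} (F G : Phase n → ℝ) (x : Phase n) :
    poisson F G x = grad F x ⬝ᵥ (symplJ n *ᵥ grad G x) := by
  simp only [poisson, dotProduct, Matrix.mulVec, symplJ, Fintype.sum_sum_type,
    Matrix.fromBlocks_apply₁₁, Matrix.fromBlocks_apply₁₂, Matrix.fromBlocks_apply₂₁,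
    Matrix.fromBlocks_apply₂₂, dotProduct]
  simp [Matrix.one_apply, Finset.mul_sum, Finset.sum_sub_distrib]
  ring

lemma skew_core {m : Type*} [Fintype m] [DecidableEq m]
    (A B J : Matrix m m ℝ) (g : m → ℝ)
    (hJ : J * J = -1) (hJT : Jᵀ = -J)
    (hA : Aᵀ * J = J * A) (hB : Bᵀ * J = J * B)
    (hAB : A * B = B * A) :
    (Aᵀ *ᵥ g) ⬝ᵥ (J *ᵥ (Bᵀ *ᵥ g)) = 0 := by
  have key : ∀ C : Matrix m m ℝ, Cᵀ * J = J * C → J * Cᵀ = C * J := by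
    intro C hC
    calc J * Cᵀ = J * Cᵀ * -(J * J) := by rw [hJ]; simp
    _ = -(J * (Cᵀ * J) * J) := by
        simp only [Matrix.mul_neg, Matrix.mul_assoc]
    _ = -(J * (J * C) * J) := by rw [hC]
    _ = -((J * J) * (C * J)) := by simp only [Matrix.mul_assoc]
    _ = C * J := by rw [hJ]; simp
  set S := A * (J * Bᵀ) with hS
  have hS' : S = A * B * J := by rw [hS, key B hB, Matrix.mul_assoc]
  have hSkew : Sᵀ = -S := by
    rw [hS', Matrix.transpose_mul, Matrix.transpose_mul, hJT]
    calc -J * (Bᵀ * Aᵀ) = -((J * Bᵀ) * Aᵀ) := by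
          simp only [Matrix.neg_mul, Matrix.mul_assoc]
    _ = -(B * (J * Aᵀ)) := by rw [key B hB, Matrix.mul_assoc]
    _ = -(B * (A * J)) := by rw [key A hA]
    _ = -(A * B * J) := by rw [← Matrix.mul_assoc, ← hAB, Matrix.mul_assoc]
  have h1 : (Aᵀ *ᵥ g) ⬝ᵥ (J *ᵥ (Bᵀ *ᵥ g)) = (g ᵥ* S) ⬝ᵥ g := by
    rw [Matrix.mulVec_mulVec, Matrix.dotProduct_mulVec, Matrix.mulVec_transpose,
      Matrix.vecMul_vecMul, hS]
  have h2 : (g ᵥ* S) ⬝ᵥ g = (S *ᵥ g) ⬝ᵥ g := by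
    rw [← Matrix.dotProduct_mulVec, dotProduct_comm]
  have h3 : (g ᵥ* S) ⬝ᵥ g = -((S *ᵥ g) ⬝ᵥ g) := by
    rw [← Matrix.mulVec_transpose, hSkew, Matrix.neg_mulVec, neg_dotProduct]
  rw [h1]
  linarith [h2, h3]

/-- Paper, Theorem 5.1, first part: functions forming a
Lenard–Haantjes chain `∇H_{α+1} = K_αᵀ∇H` for operators `K_α` that are compatible with
the symplectic structure (`K_αᵀJ = JK_α`) and pairwise commute, are pairwise in
involution with respect to the canonical Poisson bracket. -/
theorem lenard_haantjes_chain_involution {n : ℕ} [NeZero n]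
    (U : Set (Phase n)) (hU : IsOpen U)
    (H : Fin n → Phase n → ℝ)
    (hH : ∀ j, ContDiffOn ℝ (⊤ : ℕ∞) (H j) U)
    (K : Fin n → Phase n → Matrix (Fin n ⊕ Fin n) (Fin n ⊕ Fin n) ℝ)
    (hKsmooth : ∀ α a b, ContDiffOn ℝ (⊤ : ℕ∞) (fun x => K α x a b) U)
    (hK0 : ∀ x ∈ U, K 0 x = 1)
    (hcompat : ∀ α, ∀ x ∈ U, (K α x)ᵀ * symplJ n = symplJ n * K α x)
    (hcomm : ∀ α β, ∀ x ∈ U, K α x * K β x = K β x * K α x)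
    (hchain : ∀ j, ∀ x ∈ U, grad (H j) x = (K j x)ᵀ *ᵥ grad (H 0) x) :
    ∀ i j, ∀ x ∈ U, poisson (H i) (H j) x = 0 := by
  intro i j x hx
  rw [poisson_eq_dot, hchain i x hx, hchain j x hx]
  exact skew_core (K i x) (K j x) (symplJ n) (grad (H 0) x)
    (symplJ_sq n) (symplJ_transpose n) (hcompat i x hx) (hcompat j x hx) (hcomm i j x hx)
end

section
/- Let U ⊆ ℝ^{2n} be open with coordinates (J₁,…,Jₙ,φ₁,…,φₙ) (action-angle variables), and let H = H₁, H₂,…,Hₙ : U → ℝ be smooth functions depending only on (J₁,…,Jₙ), with frequencies ν_i := ∂H/∂J_i nowhere zero on U. Define for α = 0,…,n−1 the diagonal matrix fields K_α(x) whose action is K_α = Σ_{i=1}^n (∂H_{α+1}/∂J_i)/ν_i · ( ∂/∂J_i ⊗ dJ_i + ∂/∂φ_i ⊗ dφ_i ). Then: (1) each K_α satisfies K_αᵀJ = JK_α where J is the standard symplectic matrix for ω = Σ dJ_i ∧ dφ_i; (2) the K_α pairwise commute; (3) each K_α, being a diagonal field of operators, has identically vanishing Haantjes tensor; (4) the chain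 relations K_α(x)ᵀ∇H(x) = ∇H_{α+1}(x) hold; and (5) if the differentials dH₁,…,dHₙ are linearly independent at each point, then K₀,…,K_{n−1} are pointwise linearly independent. (Paper: Theorem 5.1, converse part — every non-degenerate Liouville-integrable system admits, near an Arnold torus, the ωH structure (5.2).) -/
open Matrix

/-- The diagonal Haantjes operators (5.2) of an integrable system in action-angle
variables: `K_α = Σᵢ (∂H_{α+1}/∂Jᵢ)/νᵢ · (∂/∂Jᵢ ⊗ dJᵢ + ∂/∂φᵢ ⊗ dφᵢ)`, where
`νᵢ = ∂H/∂Jᵢ` and the actions are the `Sum.inl` coordinates. -/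
noncomputable def actionAngleK {n : ℕ} [NeZero n] (H : Fin n → Phase n → ℝ)
    (α : Fin n) (x : Phase n) : Matrix (Fin n ⊕ Fin n) (Fin n ⊕ Fin n) ℝ :=
  Matrix.diagonal (fun s =>
    fderiv ℝ (H α) x (Pi.single (Sum.inl (Sum.elim id id s)) 1) /
      fderiv ℝ (H 0) x (Pi.single (Sum.inl (Sum.elim id id s)) 1))

/-- Componentwise evaluation of the Fréchet derivative of a vector field. -/
lemma fderiv_comp_apply {n : ℕ} (F : Phase n → Phase n) {x : Phase n}
    (h : ∀ t, DifferentiableAt ℝ (fun y => F y t) x) (v : Phase n) (s : Fin n ⊕ Fin n) :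
    fderiv ℝ F x v s = fderiv ℝ (fun y => F y s) x v := by
  have h1 : fderiv ℝ F x = ContinuousLinearMap.pi (fun t => fderiv ℝ (fun y => F y t) x) :=
    fderiv_pi h
  rw [h1]; rfl

/-- Component formula for the Nijenhuis torsion of a diagonal field of operators. -/
lemma diag_torsion_comp {n : ℕ} (l : (Fin n ⊕ Fin n) → Phase n → ℝ)
    (X Y : Phase n → Phase n) (x : Phase n)
    (hl : ∀ s, DifferentiableAt ℝ (l s) x)
    (hX : ∀ s, DifferentiableAt ℝ (fun y => X y s) x)
    (hY : ∀ s, DifferentiableAt ℝ (fun y => Y y s) x) (s : Fin n ⊕ Fin n) :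
    nijenhuisTorsionP (fun y => Matrix.diagonal fun t => l t y) X Y x s
      = (fderiv ℝ (l s) x (fun t => l t x * X x t) - l s x * fderiv ℝ (l s) x (X x)) * Y x s
        - (fderiv ℝ (l s) x (fun t => l t x * Y x t) - l s x * fderiv ℝ (l s) x (Y x)) * X x s := by
  have hmX : matVec (fun y => Matrix.diagonal fun t => l t y) X = fun y t => l t y * X y t := by
    funext y t; simp [matVec, Matrix.mulVec_diagonal]
  have hmY : matVec (fun y => Matrix.diagonal fun t => l t y) Y = fun y t => l t y * Y y t := by
    funext y t; simp [matVec, Matrix.mulVec_diagonal]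
  have hX' : ∀ t, DifferentiableAt ℝ (fun y => l t y * X y t) x := fun t => (hl t).mul (hX t)
  have hY' : ∀ t, DifferentiableAt ℝ (fun y => l t y * Y y t) x := fun t => (hl t).mul (hY t)
  simp only [nijenhuisTorsionP, lieBracketP, hmX, hmY, Pi.add_apply, Pi.sub_apply,
    Matrix.mulVec_diagonal]
  simp only [fderiv_comp_apply X hX, fderiv_comp_apply Y hY,
    fderiv_comp_apply (fun y t => l t y * X y t) hX',
    fderiv_comp_apply (fun y t => l t y * Y y t) hY']
  rw [fderiv_fun_mul (hl s) (hX s), fderiv_fun_mul (hl s) (hY s)]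
  simp only [ContinuousLinearMap.add_apply, ContinuousLinearMap.coe_smul', Pi.smul_apply,
    smul_eq_mul]
  ring

/-- Any diagonal field of operators with (pointwise) differentiable entries has vanishing
Haantjes tensor at that point. -/
lemma diag_haantjes_zero {n : ℕ} (l : (Fin n ⊕ Fin n) → Phase n → ℝ)
    (X Y : Phase n → Phase n) (x : Phase n)
    (hl : ∀ s, DifferentiableAt ℝ (l s) x)
    (hX : ∀ s, DifferentiableAt ℝ (fun y => X y s) x)
    (hY : ∀ s, DifferentiableAt ℝ (fun y => Y y s) x) :
    haantjesTensorP (fun y => Matrix.diagonal fun t => l t y) X Y x = 0 := by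
  have hmX : matVec (fun y => Matrix.diagonal fun t => l t y) X = fun y t => l t y * X y t := by
    funext y t; simp [matVec, Matrix.mulVec_diagonal]
  have hmY : matVec (fun y => Matrix.diagonal fun t => l t y) Y = fun y t => l t y * Y y t := by
    funext y t; simp [matVec, Matrix.mulVec_diagonal]
  have hX' : ∀ t, DifferentiableAt ℝ (fun y => l t y * X y t) x := fun t => (hl t).mul (hX t)
  have hY' : ∀ t, DifferentiableAt ℝ (fun y => l t y * Y y t) x := fun t => (hl t).mul (hY t)
  funext s
  simp only [haantjesTensorP, hmX, hmY, Pi.add_apply, Pi.sub_apply, Pi.zero_apply,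
    Matrix.mulVec_diagonal]
  simp only [diag_torsion_comp l X Y x hl hX hY,
    diag_torsion_comp l (fun y t => l t y * X y t) (fun y t => l t y * Y y t) x hl hX' hY',
    diag_torsion_comp l X (fun y t => l t y * Y y t) x hl hX hY',
    diag_torsion_comp l (fun y t => l t y * X y t) Y x hl hX' hY]
  ring

/-- A function depending only on the action coordinates has vanishing derivative in the
angle directions. -/
lemma angle_fderiv_zero {n : ℕ} {f : Phase n → ℝ} {x : Phase n}
    (hdiff : DifferentiableAt ℝ f x)
    (hconst : ∀ y z : Phase n, (∀ i, y (Sum.inl i) = z (Sum.inl i)) → f y = f z)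
    (i : Fin n) : fderiv ℝ f x (Pi.single (Sum.inr i) 1) = 0 := by
  set e : Phase n := Pi.single (Sum.inr i) 1 with he
  have hc : ∀ t : ℝ, f (x + t • e) = f x := by
    intro t
    refine hconst _ _ fun j => ?_
    simp [he, Pi.single_eq_of_ne (Sum.inl_ne_inr (a := j) (b := i))]
  have hline : HasDerivAt (fun t : ℝ => x + t • e) e 0 := by
    simpa using ((hasDerivAt_id (0 : ℝ)).smul_const e).const_add x
  have h1 : HasDerivAt (fun t : ℝ => f (x + t • e)) (fderiv ℝ f x e) 0 := by
    have hdiff' : HasFDerivAt f (fderiv ℝ f x) (x + (0 : ℝ) • e) := by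
      simpa using hdiff.hasFDerivAt
    exact hdiff'.comp_hasDerivAt 0 hline
  have h2 : HasDerivAt (fun t : ℝ => f (x + t • e)) 0 0 := by
    have : (fun t : ℝ => f (x + t • e)) = fun _ => f x := funext hc
    rw [this]; exact hasDerivAt_const 0 (f x)
  exact h1.unique h2

/-- A diagonal matrix whose action-block and angle-block entries agree commutes with `J`
in the sense `DᵀJ = JD`. -/
lemma diag_symplJ_comm {n : ℕ} (d : Fin n ⊕ Fin n → ℝ)
    (hd : ∀ i, d (Sum.inl i) = d (Sum.inr i)) :
    (Matrix.diagonal d)ᵀ * symplJ n = symplJ n * Matrix.diagonal d := by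
  rw [Matrix.diagonal_transpose]
  ext s t
  rw [Matrix.diagonal_mul, Matrix.mul_diagonal]
  rcases s with i | i <;> rcases t with j | j <;>
    simp only [symplJ, Matrix.fromBlocks_apply₁₁, Matrix.fromBlocks_apply₁₂,
      Matrix.fromBlocks_apply₂₁, Matrix.fromBlocks_apply₂₂, Matrix.zero_apply,
      Matrix.one_apply, Matrix.neg_apply, mul_zero, zero_mul, mul_neg, neg_mul]
  · by_cases h : i = j
    · subst h; simp [hd]
    · simp [h]
  · by_cases h : i = j
    · subst h; simp [hd]
    · simp [h]
/-- Paper, Theorem 5.1, converse part: for a non-degenerate integrable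
system `H = H₁, …, Hₙ` depending only on the action variables, with nowhere vanishing
frequencies, the diagonal operators `K_α` of (5.2): (1) are compatible with the canonical
symplectic structure; (2) pairwise commute; (3) have identically vanishing Haantjes tensor;
(4) satisfy the Lenard–Haantjes chain relations `K_αᵀ∇H = ∇H_{α+1}`; and (5) are pointwise
linearly independent whenever the differentials `dH₁,…,dHₙ` are. -/
theorem action_angle_haantjes_structure {n : ℕ} [NeZero n]
    (U : Set (Phase n)) (hU : IsOpen U)
    (H : Fin n → Phase n → ℝ)
    (hHsmooth : ∀ α, ContDiffOn ℝ (⊤ : ℕ∞) (H α) U)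
    (hactions : ∀ α (x y : Phase n), (∀ i, x (Sum.inl i) = y (Sum.inl i)) → H α x = H α y)
    (hfreq : ∀ x ∈ U, ∀ i, fderiv ℝ (H 0) x (Pi.single (Sum.inl i) 1) ≠ 0) :
    (∀ α, ∀ x ∈ U, (actionAngleK H α x)ᵀ * symplJ n = symplJ n * actionAngleK H α x) ∧
    (∀ α β, ∀ x ∈ U, actionAngleK H α x * actionAngleK H β x
      = actionAngleK H β x * actionAngleK H α x) ∧
    (∀ α (X Y : Phase n → Phase n),
      ContDiffOn ℝ (⊤ : ℕ∞) X U → ContDiffOn ℝ (⊤ : ℕ∞) Y U →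
      ∀ x ∈ U, haantjesTensorP (actionAngleK H α) X Y x = 0) ∧
    (∀ α, ∀ x ∈ U, (actionAngleK H α x)ᵀ *ᵥ grad (H 0) x = grad (H α) x) ∧
    (∀ x ∈ U, LinearIndependent ℝ (fun j => grad (H j) x) →
      LinearIndependent ℝ (fun α => actionAngleK H α x)) := by
  have hdH : ∀ β : Fin n, ∀ x ∈ U, DifferentiableAt ℝ (H β) x := fun β x hx =>
    ((hHsmooth β).differentiableOn (by simp)).differentiableAt (hU.mem_nhds hx)
  have hl : ∀ (α : Fin n), ∀ x ∈ U, ∀ s : Fin n ⊕ Fin n,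
      DifferentiableAt ℝ (fun y =>
        fderiv ℝ (H α) y (Pi.single (Sum.inl (Sum.elim id id s)) 1) /
        fderiv ℝ (H 0) y (Pi.single (Sum.inl (Sum.elim id id s)) 1)) x := by
    intro α x hx s
    have hnum : ∀ β : Fin n, DifferentiableAt ℝ
        (fun y => fderiv ℝ (H β) y (Pi.single (Sum.inl (Sum.elim id id s)) 1)) x := by
      intro β
      have h1 : ContDiffOn ℝ (⊤ : ℕ∞) (fun y => fderiv ℝ (H β) y) U :=
        (hHsmooth β).fderiv_of_isOpen hU (by exact_mod_cast le_top)
      have h2 : ContDiffOn ℝ (⊤ : ℕ∞)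
          (fun y => fderiv ℝ (H β) y (Pi.single (Sum.inl (Sum.elim id id s)) 1)) U :=
        h1.clm_apply contDiffOn_const
      exact (h2.differentiableOn (by simp)).differentiableAt (hU.mem_nhds hx)
    have h3 := (hnum α).mul ((hnum 0).inv (hfreq x hx _))
    simpa [div_eq_mul_inv, Pi.mul_def, Pi.inv_def] using h3
  refine ⟨?_, ?_, ?_, ?_, ?_⟩
  · -- (1) compatibility with the symplectic structure
    intro α x hx
    exact diag_symplJ_comm _ fun i => rfl
  · -- (2) pairwise commutation
    intro α β x hx
    simp only [actionAngleK, Matrix.diagonal_mul_diagonal]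
    exact congrArg _ (mul_comm _ _)
  · -- (3) vanishing Haantjes tensor
    intro α X Y hXc hYc x hx
    have hXd : ∀ s, DifferentiableAt ℝ (fun y => X y s) x := fun s =>
      differentiableAt_pi.1 ((hXc.differentiableOn (by simp)).differentiableAt (hU.mem_nhds hx)) s
    have hYd : ∀ s, DifferentiableAt ℝ (fun y => Y y s) x := fun s =>
      differentiableAt_pi.1 ((hYc.differentiableOn (by simp)).differentiableAt (hU.mem_nhds hx)) s
    exact diag_haantjes_zero
      (fun s y => fderiv ℝ (H α) y (Pi.single (Sum.inl (Sum.elim id id s)) 1) /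
        fderiv ℝ (H 0) y (Pi.single (Sum.inl (Sum.elim id id s)) 1)) X Y x
      (hl α x hx) hXd hYd
  · -- (4) Lenard–Haantjes chain relations
    intro α x hx
    funext s
    simp only [actionAngleK, Matrix.diagonal_transpose, Matrix.mulVec_diagonal]
    rcases s with i | i
    · simp only [Sum.elim_inl, id_eq, grad]
      exact div_mul_cancel₀ _ (hfreq x hx i)
    · simp [grad, angle_fderiv_zero (hdH 0 x hx) (hactions 0) i,
        angle_fderiv_zero (hdH α x hx) (hactions α) i]
  · -- (5) pointwise linear independence
    intro x hx hind
    rw [Fintype.linearIndependent_iff] at hind ⊢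
    intro g hg
    have hν : ∀ i : Fin n, fderiv ℝ (H 0) x (Pi.single (Sum.inl i) 1) ≠ 0 := hfreq x hx
    have key : ∀ i : Fin n, ∑ j, g j * fderiv ℝ (H j) x (Pi.single (Sum.inl i) 1) = 0 := by
      intro i
      have h0 := congrFun (congrFun hg (Sum.inl i)) (Sum.inl i)
      have h1 : ∑ j, g j * (fderiv ℝ (H j) x (Pi.single (Sum.inl i) 1) /
          fderiv ℝ (H 0) x (Pi.single (Sum.inl i) 1)) = 0 := by
        simpa [actionAngleK, Matrix.sum_apply, Matrix.smul_apply, smul_eq_mul,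
          Matrix.diagonal_apply_eq] using h0
      calc ∑ j, g j * fderiv ℝ (H j) x (Pi.single (Sum.inl i) 1)
          = ∑ j, (g j * (fderiv ℝ (H j) x (Pi.single (Sum.inl i) 1) /
              fderiv ℝ (H 0) x (Pi.single (Sum.inl i) 1))) *
              fderiv ℝ (H 0) x (Pi.single (Sum.inl i) 1) := by
            refine Finset.sum_congr rfl fun j _ => ?_
            rw [mul_assoc, div_mul_cancel₀ _ (hν i)]
        _ = (∑ j, g j * (fderiv ℝ (H j) x (Pi.single (Sum.inl i) 1) /
              fderiv ℝ (H 0) x (Pi.single (Sum.inl i) 1))) *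
              fderiv ℝ (H 0) x (Pi.single (Sum.inl i) 1) := (Finset.sum_mul ..).symm
        _ = 0 := by rw [h1, zero_mul]
    have hzero : ∑ j, g j • grad (H j) x = 0 := by
      funext s
      rcases s with i | i
      · simp only [Finset.sum_apply, Pi.smul_apply, smul_eq_mul, Pi.zero_apply, grad]
        exact key i
      · simp only [Finset.sum_apply, Pi.smul_apply, smul_eq_mul, Pi.zero_apply, grad]
        refine Finset.sum_eq_zero fun j _ => ?_
        rw [angle_fderiv_zero (hdH j x hx) (hactions j) i, mul_zero]
    exact hind g hzero
end

section
/- Let φ₁, φ₂ : ℝ² → ℝ be differentiable functions satisfying the Cauchy–Riemann equations ∂φ₁/∂u = ∂φ₂/∂v and ∂φ₁/∂v = −∂φ₂/∂u (i.e. φ₁ + iφ₂ is holomorphic in u + iv), and similarly let ψ₁, ψ₂ : ℝ² → ℝ satisfy ∂ψ₁/∂x = ∂ψ₂/∂y and ∂ψ₁/∂y = −∂ψ₂/∂x. Define on ℝ⁴ (coordinates x, y, p_x, p_y) the Hamiltonians H₁(x,y,p_x,p_y) = φ₁(p_x,p_y) + ψ₁(x,y) and H₂(x,y,p_x,p_y)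 = φ₂(p_x,p_y) − ψ₂(x,y). Then {H₁, H₂} = 0 for the canonical Poisson bracket, so H₁ is a completely integrable Hamiltonian with first integral H₂. (Paper: Theorem 6.1 on integrable systems from analytic/harmonic functions, with the relative sign between φ₂ and ψ₂ fixed so that the stated involution holds; e.g. H₁ = p_x³ − 3p_xp_y² + x² − y² admits the integral H₂ = 3p_x²p_y − p_y³ − 2xy.) -/
/-- Canonical Poisson bracket on `ℝ⁴` with coordinates `(x, y, p_x, p_y)`:
`{F,G} = ∂F/∂x·∂G/∂p_x + ∂F/∂y·∂G/∂p_y − ∂F/∂p_x·∂G/∂x − ∂F/∂p_y·∂G/∂y`. -/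
noncomputable def poisson4 (F G : ℝ × ℝ × ℝ × ℝ → ℝ) (z : ℝ × ℝ × ℝ × ℝ) : ℝ :=
  fderiv ℝ F z (1, 0, 0, 0) * fderiv ℝ G z (0, 0, 1, 0)
    + fderiv ℝ F z (0, 1, 0, 0) * fderiv ℝ G z (0, 0, 0, 1)
    - fderiv ℝ F z (0, 0, 1, 0) * fderiv ℝ G z (1, 0, 0, 0)
    - fderiv ℝ F z (0, 0, 0, 1) * fderiv ℝ G z (0, 1, 0, 0)

/-- Paper, Theorem 6.1: if `φ₁ + iφ₂` and `ψ₁ + iψ₂` satisfy the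
Cauchy–Riemann equations, then `H₁ = φ₁(p_x,p_y) + ψ₁(x,y)` and
`H₂ = φ₂(p_x,p_y) − ψ₂(x,y)` are in involution: `{H₁, H₂} = 0`, so `H₁` is a completely
integrable Hamiltonian with first integral `H₂`. -/
theorem integrable_from_holomorphic (φ₁ φ₂ ψ₁ ψ₂ : ℝ × ℝ → ℝ)
    (hφ₁ : Differentiable ℝ φ₁) (hφ₂ : Differentiable ℝ φ₂)
    (hψ₁ : Differentiable ℝ ψ₁) (hψ₂ : Differentiable ℝ ψ₂)
    (hCRφu : ∀ z : ℝ × ℝ, fderiv ℝ φ₁ z (1, 0) = fderiv ℝ φ₂ z (0, 1))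
    (hCRφv : ∀ z : ℝ × ℝ, fderiv ℝ φ₁ z (0, 1) = -fderiv ℝ φ₂ z (1, 0))
    (hCRψx : ∀ z : ℝ × ℝ, fderiv ℝ ψ₁ z (1, 0) = fderiv ℝ ψ₂ z (0, 1))
    (hCRψy : ∀ z : ℝ × ℝ, fderiv ℝ ψ₁ z (0, 1) = -fderiv ℝ ψ₂ z (1, 0)) :
    ∀ z : ℝ × ℝ × ℝ × ℝ,
      poisson4 (fun w => φ₁ (w.2.2.1, w.2.2.2) + ψ₁ (w.1, w.2.1))
        (fun w => φ₂ (w.2.2.1, w.2.2.2) - ψ₂ (w.1, w.2.1)) z = 0 := by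
  intro z
  set P : (ℝ × ℝ × ℝ × ℝ) →L[ℝ] ℝ × ℝ :=
    (ContinuousLinearMap.snd ℝ ℝ (ℝ × ℝ)).comp (ContinuousLinearMap.snd ℝ ℝ (ℝ × ℝ × ℝ)) with hPdef
  set Q : (ℝ × ℝ × ℝ × ℝ) →L[ℝ] ℝ × ℝ :=
    (ContinuousLinearMap.fst ℝ ℝ (ℝ × ℝ × ℝ)).prod
      ((ContinuousLinearMap.fst ℝ ℝ (ℝ × ℝ)).comp (ContinuousLinearMap.snd ℝ ℝ (ℝ × ℝ × ℝ))) with hQdef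
  have h1 : HasFDerivAt (fun w : ℝ × ℝ × ℝ × ℝ => φ₁ (w.2.2.1, w.2.2.2) + ψ₁ (w.1, w.2.1))
      ((fderiv ℝ φ₁ (P z)).comp P + (fderiv ℝ ψ₁ (Q z)).comp Q) z :=
    ((hφ₁ (P z)).hasFDerivAt.comp z P.hasFDerivAt).add
      ((hψ₁ (Q z)).hasFDerivAt.comp z Q.hasFDerivAt)
  have h2 : HasFDerivAt (fun w : ℝ × ℝ × ℝ × ℝ => φ₂ (w.2.2.1, w.2.2.2) - ψ₂ (w.1, w.2.1))
      ((fderiv ℝ φ₂ (P z)).comp P - (fderiv ℝ ψ₂ (Q z)).comp Q) z :=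
    ((hφ₂ (P z)).hasFDerivAt.comp z P.hasFDerivAt).sub
      ((hψ₂ (Q z)).hasFDerivAt.comp z Q.hasFDerivAt)
  rw [poisson4, h1.fderiv, h2.fderiv]
  have hPz : P z = (z.2.2.1, z.2.2.2) := rfl
  have hQz : Q z = (z.1, z.2.1) := rfl
  simp only [ContinuousLinearMap.add_apply, ContinuousLinearMap.sub_apply,
    ContinuousLinearMap.comp_apply, hPdef, hQdef, ContinuousLinearMap.prod_apply,
    ContinuousLinearMap.coe_fst', ContinuousLinearMap.coe_snd', hPz, hQz]
  rw [show ((0:ℝ), (0:ℝ)) = (0 : ℝ × ℝ) from rfl]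
  simp only [map_zero, hCRφu, hCRφv, hCRψx, hCRψy]
  ring
end

section
/- Let F, G, f, g : ℝ → ℝ be differentiable functions. Define on ℝ⁴ (coordinates x, y, p_x, p_y) the Hamiltonians H₁ = F(p_x − p_y) + G(p_x + p_y) + f(x − y) + g(x + y) and H₂ = −F(p_x − p_y) + G(p_x + p_y) − f(x − y) + g(x + y). Then {H₁, H₂} = 0 for the canonical Poisson bracket; hence H₁ defines a completely integrable system, separable in the characteristic coordinates ξ = (x+y)/√2, η = (x−y)/√2. (Paper: Theorem 6.3 on integrable systems from solutions of the wave equation; for F,G,f,g powers this includes the Sawada–Kotera system and new families of integrable systems.) -/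
namespace WaveAux

open ContinuousLinearMap

/-- first coordinate -/
noncomputable def πx : (ℝ × ℝ × ℝ × ℝ) →L[ℝ] ℝ := fst ℝ ℝ (ℝ × ℝ × ℝ)

noncomputable def πy : (ℝ × ℝ × ℝ × ℝ) →L[ℝ] ℝ :=
  (fst ℝ ℝ (ℝ × ℝ)).comp (snd ℝ ℝ (ℝ × ℝ × ℝ))

noncomputable def πpx : (ℝ × ℝ × ℝ × ℝ) →L[ℝ] ℝ :=
  ((fst ℝ ℝ ℝ).comp (snd ℝ ℝ (ℝ × ℝ))).comp (snd ℝ ℝ (ℝ × ℝ × ℝ))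

noncomputable def πpy : (ℝ × ℝ × ℝ × ℝ) →L[ℝ] ℝ :=
  ((snd ℝ ℝ ℝ).comp (snd ℝ ℝ (ℝ × ℝ))).comp (snd ℝ ℝ (ℝ × ℝ × ℝ))

lemma hasFDerivAt_H (F G f g : ℝ → ℝ)
    (hF : Differentiable ℝ F) (hG : Differentiable ℝ G)
    (hf : Differentiable ℝ f) (hg : Differentiable ℝ g) (z : ℝ × ℝ × ℝ × ℝ) :
    HasFDerivAt (fun w : ℝ × ℝ × ℝ × ℝ => F (w.2.2.1 - w.2.2.2) + G (w.2.2.1 + w.2.2.2)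
          + f (w.1 - w.2.1) + g (w.1 + w.2.1))
      (deriv F (z.2.2.1 - z.2.2.2) • (πpx - πpy) + deriv G (z.2.2.1 + z.2.2.2) • (πpx + πpy)
        + deriv f (z.1 - z.2.1) • (πx - πy) + deriv g (z.1 + z.2.1) • (πx + πy)) z := by
  have h1 : HasFDerivAt (fun w : ℝ × ℝ × ℝ × ℝ => F (w.2.2.1 - w.2.2.2))
      (deriv F (z.2.2.1 - z.2.2.2) • (πpx - πpy)) z :=
    ((hF (z.2.2.1 - z.2.2.2)).hasDerivAt).comp_hasFDerivAt z ((πpx - πpy).hasFDerivAt)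
  have h2 : HasFDerivAt (fun w : ℝ × ℝ × ℝ × ℝ => G (w.2.2.1 + w.2.2.2))
      (deriv G (z.2.2.1 + z.2.2.2) • (πpx + πpy)) z :=
    ((hG (z.2.2.1 + z.2.2.2)).hasDerivAt).comp_hasFDerivAt z ((πpx + πpy).hasFDerivAt)
  have h3 : HasFDerivAt (fun w : ℝ × ℝ × ℝ × ℝ => f (w.1 - w.2.1))
      (deriv f (z.1 - z.2.1) • (πx - πy)) z :=
    ((hf (z.1 - z.2.1)).hasDerivAt).comp_hasFDerivAt z ((πx - πy).hasFDerivAt)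
  have h4 : HasFDerivAt (fun w : ℝ × ℝ × ℝ × ℝ => g (w.1 + w.2.1))
      (deriv g (z.1 + z.2.1) • (πx + πy)) z :=
    ((hg (z.1 + z.2.1)).hasDerivAt).comp_hasFDerivAt z ((πx + πy).hasFDerivAt)
  exact ((h1.add h2).add h3).add h4

end WaveAux

/-- Paper, Theorem 6.3, integrable systems from the wave equation:
for differentiable `F, G, f, g : ℝ → ℝ`, the Hamiltonians
`H₁ = F(p_x−p_y) + G(p_x+p_y) + f(x−y) + g(x+y)` and
`H₂ = −F(p_x−p_y) + G(p_x+p_y) − f(x−y) + g(x+y)` are in involution `{H₁,H₂} = 0`,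
so `H₁` defines a completely integrable system. -/
theorem integrable_from_wave_equation (F G f g : ℝ → ℝ)
    (hF : Differentiable ℝ F) (hG : Differentiable ℝ G)
    (hf : Differentiable ℝ f) (hg : Differentiable ℝ g) :
    ∀ z : ℝ × ℝ × ℝ × ℝ,
      poisson4
        (fun w => F (w.2.2.1 - w.2.2.2) + G (w.2.2.1 + w.2.2.2)
          + f (w.1 - w.2.1) + g (w.1 + w.2.1))
        (fun w => -F (w.2.2.1 - w.2.2.2) + G (w.2.2.1 + w.2.2.2)
          - f (w.1 - w.2.1) + g (w.1 + w.2.1)) z = 0 := by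
  intro z
  have h1 := (WaveAux.hasFDerivAt_H F G f g hF hG hf hg z).fderiv
  have h2 := (WaveAux.hasFDerivAt_H (fun t => -F t) G (fun t => -f t) g
      hF.neg hG hf.neg hg z).fderiv
  have e2 : (fun w : ℝ × ℝ × ℝ × ℝ => (fun t => -F t) (w.2.2.1 - w.2.2.2)
        + G (w.2.2.1 + w.2.2.2) + (fun t => -f t) (w.1 - w.2.1) + g (w.1 + w.2.1))
      = (fun w : ℝ × ℝ × ℝ × ℝ => -F (w.2.2.1 - w.2.2.2) + G (w.2.2.1 + w.2.2.2)
        - f (w.1 - w.2.1) + g (w.1 + w.2.1)) := by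
    funext w; ring
  rw [e2] at h2
  have dnF : ∀ t : ℝ, deriv (fun t => -F t) t = -deriv F t := fun t => deriv.neg
  have dnf : ∀ t : ℝ, deriv (fun t => -f t) t = -deriv f t := fun t => deriv.neg
  simp only [poisson4, h1, h2, dnF, dnf]
  simp only [ContinuousLinearMap.add_apply, ContinuousLinearMap.sub_apply,
    ContinuousLinearMap.smul_apply, WaveAux.πx, WaveAux.πy, WaveAux.πpx, WaveAux.πpy,
    ContinuousLinearMap.coe_comp', Function.comp_apply, ContinuousLinearMap.coe_fst',
    ContinuousLinearMap.coe_snd', smul_eq_mul]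
  ring
end

section
/- Let f_k, g_k : ℝ² → ℝ, k = 1,…,n, be smooth, and on the open subset U of ℝ^{2n} (coordinates (q₁,…,qₙ,p₁,…,pₙ)) where G(q,p) := Σ_{k=1}^n g_k(q_k,p_k) ≠ 0, define the Gantmacher Hamiltonian H := (Σ_{k=1}^n f_k(q_k,p_k)) / G and the functions I_j := f_j(q_j,p_j) − H·g_j(q_j,p_j) for j = 1,…,n−1. Define the operator fields K_j := −g_j(q_j,p_j)·I + G·Π_j, where Π_j := ∂/∂q_j ⊗ dq_j + ∂/∂p_j ⊗ dp_j and I is the identity operator. Then: (1) the Lenard–Haantjes chain relations hold, K_jᵀ dH = dI_j for j = 1,…,n−1; (2) each K_j satisfies K_jᵀJ = JK_j for the standard symplectic matrix J, and the K_j pairwise commute; and consequently (3) the functions are in involution: {H, I_j} = 0 and {I_j, I_k} = 0 for the canonical Poisson bracket. (Paper: Proposition on Gantmacher systems in Section 7.4; the spectrum of K_j is {−g_j, G − g_j}.) -/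
open Matrix

/-- `G(q,p) = Σ_k g_k(q_k,p_k)`. -/
noncomputable def gantG {n : ℕ} (g : Fin n → ℝ × ℝ → ℝ) (x : Phase n) : ℝ :=
  ∑ k : Fin n, g k (x (Sum.inl k), x (Sum.inr k))

/-- The Gantmacher Hamiltonian `H = (Σ_k f_k(q_k,p_k)) / (Σ_k g_k(q_k,p_k))`. -/
noncomputable def gantH {n : ℕ} (f g : Fin n → ℝ × ℝ → ℝ) (x : Phase n) : ℝ :=
  (∑ k : Fin n, f k (x (Sum.inl k), x (Sum.inr k))) / gantG g x

/-- The Gantmacher integrals of motion `I_j = f_j(q_j,p_j) − H·g_j(q_j,p_j)`. -/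
noncomputable def gantI {n : ℕ} (f g : Fin n → ℝ × ℝ → ℝ) (j : Fin n) (x : Phase n) : ℝ :=
  f j (x (Sum.inl j), x (Sum.inr j)) - gantH f g x * g j (x (Sum.inl j), x (Sum.inr j))

/-- The projector `Π_j = ∂/∂q_j ⊗ dq_j + ∂/∂p_j ⊗ dp_j` onto the `(q_j,p_j)` plane. -/
def gantProj {n : ℕ} (j : Fin n) : Matrix (Fin n ⊕ Fin n) (Fin n ⊕ Fin n) ℝ :=
  Matrix.diagonal (fun s => if Sum.elim id id s = j then 1 else 0)

/-- The Gantmacher Haantjes operators `K_j = −g_j·I + G·Π_j`. -/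
noncomputable def gantK {n : ℕ} (g : Fin n → ℝ × ℝ → ℝ) (j : Fin n) (x : Phase n) :
    Matrix (Fin n ⊕ Fin n) (Fin n ⊕ Fin n) ℝ :=
  (-(g j (x (Sum.inl j), x (Sum.inr j)))) • (1 : Matrix (Fin n ⊕ Fin n) (Fin n ⊕ Fin n) ℝ)
    + gantG g x • gantProj j


/-! ### Auxiliary machinery -/

/-- The continuous linear projection onto the `(q_k,p_k)` plane. -/
noncomputable def pik {n : ℕ} (k : Fin n) : Phase n →L[ℝ] ℝ × ℝ :=
  (ContinuousLinearMap.proj (Sum.inl k)).prod (ContinuousLinearMap.proj (Sum.inr k))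

/-- Direction of the coordinate `s` in its own plane. -/
def dirP {n : ℕ} : Fin n ⊕ Fin n → ℝ × ℝ := Sum.elim (fun _ => (1,0)) (fun _ => (0,1))

lemma pik_single_eq {n : ℕ} (s : Fin n ⊕ Fin n) :
    pik (Sum.elim id id s) (Pi.single s (1:ℝ)) = dirP s := by
  cases s <;> simp [pik, dirP, Pi.single_apply]

lemma pik_single_ne {n : ℕ} (s : Fin n ⊕ Fin n) (k : Fin n) (h : Sum.elim id id s ≠ k) :
    pik k (Pi.single s (1:ℝ)) = 0 := by
  cases s <;> simp_all [pik, Pi.single_apply, Prod.ext_iff]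

lemma hasF_single {n : ℕ} (f : Fin n → ℝ × ℝ → ℝ) (hf : ∀ k, ContDiff ℝ (⊤ : ℕ∞) (f k))
    (k : Fin n) (x : Phase n) :
    HasFDerivAt (fun y : Phase n => f k (y (Sum.inl k), y (Sum.inr k)))
      ((fderiv ℝ (f k) (x (Sum.inl k), x (Sum.inr k))).comp (pik k)) x := by
  have h1 : HasFDerivAt (f k) (fderiv ℝ (f k) (pik k x)) (pik k x) :=
    (((hf k).differentiable (by simp)) (pik k x)).hasFDerivAt
  exact h1.comp x (pik k).hasFDerivAt

lemma hasF_sum {n : ℕ} (f : Fin n → ℝ × ℝ → ℝ) (hf : ∀ k, ContDiff ℝ (⊤ : ℕ∞) (f k))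
    (x : Phase n) :
    HasFDerivAt (fun y : Phase n => ∑ k : Fin n, f k (y (Sum.inl k), y (Sum.inr k)))
      (∑ k : Fin n, (fderiv ℝ (f k) (x (Sum.inl k), x (Sum.inr k))).comp (pik k)) x :=
  HasFDerivAt.fun_sum (fun k _ => hasF_single f hf k x)

/-- The total derivative of the Gantmacher Hamiltonian. -/
noncomputable def hders {n : ℕ} (f g : Fin n → ℝ × ℝ → ℝ) (x : Phase n) :
    Phase n →L[ℝ] ℝ :=
  (∑ k : Fin n, f k (x (Sum.inl k), x (Sum.inr k))) •
      ((ContinuousLinearMap.smulRight (1 : ℝ →L[ℝ] ℝ) (-((gantG g x)^2)⁻¹)).comp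
        (∑ k : Fin n, (fderiv ℝ (g k) (x (Sum.inl k), x (Sum.inr k))).comp (pik k)))
    + (gantG g x)⁻¹ • (∑ k : Fin n, (fderiv ℝ (f k) (x (Sum.inl k), x (Sum.inr k))).comp (pik k))

lemma hasF_H {n : ℕ} (f g : Fin n → ℝ × ℝ → ℝ) (hf : ∀ k, ContDiff ℝ (⊤ : ℕ∞) (f k))
    (hg : ∀ k, ContDiff ℝ (⊤ : ℕ∞) (g k)) (x : Phase n) (hx : gantG g x ≠ 0) :
    HasFDerivAt (gantH f g) (hders f g x) x := by
  have hF := hasF_sum f hf x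
  have hG := hasF_sum g hg x
  have hinv := (hasFDerivAt_inv hx).comp x hG
  have hH := hF.mul hinv
  refine hH.congr_of_eventuallyEq (Filter.Eventually.of_forall fun y => ?_) |>.congr_fderiv ?_
  · simp [gantH, gantG, div_eq_mul_inv, Function.comp]
  · rfl

/-- The collapsed partial derivative `∂F/∂s` at the block of `s`. -/
noncomputable def DF {n : ℕ} (f : Fin n → ℝ × ℝ → ℝ) (x : Phase n) (s : Fin n ⊕ Fin n) : ℝ :=
  fderiv ℝ (f (Sum.elim id id s))
    (x (Sum.inl (Sum.elim id id s)), x (Sum.inr (Sum.elim id id s))) (dirP s)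

lemma sumD_apply {n : ℕ} (f : Fin n → ℝ × ℝ → ℝ) (x : Phase n) (s : Fin n ⊕ Fin n) :
    (∑ k : Fin n, (fderiv ℝ (f k) (x (Sum.inl k), x (Sum.inr k))).comp (pik k))
      (Pi.single s (1:ℝ)) = DF f x s := by
  rw [ContinuousLinearMap.sum_apply, Finset.sum_eq_single (Sum.elim id id s)]
  · rw [ContinuousLinearMap.comp_apply, pik_single_eq]; rfl
  · intro k _ hk
    rw [ContinuousLinearMap.comp_apply, pik_single_ne s k (Ne.symm hk), map_zero]
  · intro h; exact absurd (Finset.mem_univ _) h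

lemma gradH_eq {n : ℕ} (f g : Fin n → ℝ × ℝ → ℝ) (hf : ∀ k, ContDiff ℝ (⊤ : ℕ∞) (f k))
    (hg : ∀ k, ContDiff ℝ (⊤ : ℕ∞) (g k)) (x : Phase n) (hx : gantG g x ≠ 0)
    (s : Fin n ⊕ Fin n) :
    grad (gantH f g) x s =
      (∑ k : Fin n, f k (x (Sum.inl k), x (Sum.inr k))) * (DF g x s * (-((gantG g x)^2)⁻¹))
        + (gantG g x)⁻¹ * DF f x s := by
  have hH := hasF_H f g hf hg x hx
  simp only [grad, hH.fderiv, hders, ContinuousLinearMap.add_apply,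
    ContinuousLinearMap.smul_apply, ContinuousLinearMap.comp_apply,
    ContinuousLinearMap.smulRight_apply, ContinuousLinearMap.one_apply, smul_eq_mul,
    sumD_apply]

lemma gradI_eq {n : ℕ} (f g : Fin n → ℝ × ℝ → ℝ) (hf : ∀ k, ContDiff ℝ (⊤ : ℕ∞) (f k))
    (hg : ∀ k, ContDiff ℝ (⊤ : ℕ∞) (g k)) (j : Fin n) (x : Phase n) (hx : gantG g x ≠ 0)
    (s : Fin n ⊕ Fin n) :
    grad (gantI f g j) x s =
      (if Sum.elim id id s = j then DF f x s - gantH f g x * DF g x s else 0)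
        - g j (x (Sum.inl j), x (Sum.inr j)) * grad (gantH f g) x s := by
  have hHd : HasFDerivAt (gantH f g) (fderiv ℝ (gantH f g) x) x :=
    (hasF_H f g hf hg x hx).differentiableAt.hasFDerivAt
  have hfj := hasF_single f hf j x
  have hgj := hasF_single g hg j x
  have hI := hfj.sub (hHd.mul hgj)
  have hI' : HasFDerivAt (gantI f g j) _ x := hI
  simp only [grad, hI'.fderiv, ContinuousLinearMap.sub_apply, ContinuousLinearMap.add_apply,
    ContinuousLinearMap.smul_apply, ContinuousLinearMap.comp_apply, smul_eq_mul]
  by_cases h : Sum.elim id id s = j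
  · subst h
    rw [pik_single_eq, if_pos rfl]
    show _ - (_ * _ + _ * _) = _
    simp only [DF]
    ring
  · rw [pik_single_ne s j h, map_zero, map_zero, if_neg h]
    ring

/-- The diagonal entries of the operator `K_j`. -/
noncomputable def kfun {n : ℕ} (g : Fin n → ℝ × ℝ → ℝ) (j : Fin n) (x : Phase n)
    (s : Fin n ⊕ Fin n) : ℝ :=
  -(g j (x (Sum.inl j), x (Sum.inr j))) + gantG g x * (if Sum.elim id id s = j then 1 else 0)

lemma gantK_diag {n : ℕ} (g : Fin n → ℝ × ℝ → ℝ) (j : Fin n) (x : Phase n) :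
    gantK g j x = Matrix.diagonal (kfun g j x) := by
  ext s t
  by_cases h : s = t <;>
    simp [gantK, gantProj, kfun, Matrix.diagonal_apply, Matrix.one_apply, h]

lemma kfun_inl_inr {n : ℕ} (g : Fin n → ℝ × ℝ → ℝ) (j : Fin n) (x : Phase n) (i : Fin n) :
    kfun g j x (Sum.inl i) = kfun g j x (Sum.inr i) := rfl

lemma gradI_kappa {n : ℕ} (f g : Fin n → ℝ × ℝ → ℝ) (hf : ∀ k, ContDiff ℝ (⊤ : ℕ∞) (f k))
    (hg : ∀ k, ContDiff ℝ (⊤ : ℕ∞) (g k)) (j : Fin n) (x : Phase n) (hx : gantG g x ≠ 0)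
    (s : Fin n ⊕ Fin n) :
    grad (gantI f g j) x s = kfun g j x s * grad (gantH f g) x s := by
  rw [gradI_eq f g hf hg j x hx s, kfun]
  by_cases h : Sum.elim id id s = j
  · rw [if_pos h, if_pos h, gradH_eq f g hf hg x hx s, gantH]
    field_simp
    ring
  · rw [if_neg h, if_neg h]
    ring

/-- Paper, Section 7.4, Gantmacher systems: on the open set where
`G ≠ 0`: (1) the Lenard–Haantjes chain relations `K_jᵀdH = dI_j` hold; (2) each `K_j` is
compatible with the canonical symplectic structure and the `K_j` pairwise commute;
consequently (3) `{H, I_j} = 0` and `{I_j, I_k} = 0`. -/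
theorem gantmacher_haantjes_structure {n : ℕ} (f g : Fin n → ℝ × ℝ → ℝ)
    (hf : ∀ k, ContDiff ℝ (⊤ : ℕ∞) (f k)) (hg : ∀ k, ContDiff ℝ (⊤ : ℕ∞) (g k)) :
    (∀ j : Fin n, ∀ x ∈ {x : Phase n | gantG g x ≠ 0},
      (gantK g j x)ᵀ *ᵥ grad (gantH f g) x = grad (gantI f g j) x) ∧
    (∀ j : Fin n, ∀ x ∈ {x : Phase n | gantG g x ≠ 0},
      (gantK g j x)ᵀ * symplJ n = symplJ n * gantK g j x) ∧
    (∀ j k : Fin n, ∀ x ∈ {x : Phase n | gantG g x ≠ 0},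
      gantK g j x * gantK g k x = gantK g k x * gantK g j x) ∧
    (∀ j : Fin n, ∀ x ∈ {x : Phase n | gantG g x ≠ 0},
      poisson (gantH f g) (gantI f g j) x = 0) ∧
    (∀ j k : Fin n, ∀ x ∈ {x : Phase n | gantG g x ≠ 0},
      poisson (gantI f g j) (gantI f g k) x = 0) := by
  refine ⟨?_, ?_, ?_, ?_, ?_⟩
  · intro j x hx
    funext s
    rw [gantK_diag, Matrix.diagonal_transpose, Matrix.mulVec_diagonal,
      gradI_kappa f g hf hg j x hx s]
  · intro j x hx
    rw [gantK_diag, Matrix.diagonal_transpose]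
    ext s t
    rw [Matrix.diagonal_mul, Matrix.mul_diagonal]
    rcases s with i|i <;> rcases t with i'|i' <;>
      simp [symplJ, Matrix.fromBlocks_apply₁₁, Matrix.fromBlocks_apply₁₂,
        Matrix.fromBlocks_apply₂₁, Matrix.fromBlocks_apply₂₂, Matrix.one_apply] <;>
      · split_ifs with h <;> [skip; rfl] <;> subst h <;> rfl
  · intro j k x hx
    rw [gantK_diag, gantK_diag, Matrix.diagonal_mul_diagonal, Matrix.diagonal_mul_diagonal]
    exact congrArg Matrix.diagonal (funext fun i => mul_comm _ _)
  · intro j x hx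
    rw [poisson]
    refine Finset.sum_eq_zero fun i _ => ?_
    rw [gradI_kappa f g hf hg j x hx (Sum.inl i), gradI_kappa f g hf hg j x hx (Sum.inr i),
      ← kfun_inl_inr g j x i]
    ring
  · intro j k x hx
    rw [poisson]
    refine Finset.sum_eq_zero fun i _ => ?_
    rw [gradI_kappa f g hf hg j x hx (Sum.inl i), gradI_kappa f g hf hg j x hx (Sum.inr i),
      gradI_kappa f g hf hg k x hx (Sum.inl i), gradI_kappa f g hf hg k x hx (Sum.inr i),
      ← kfun_inl_inr g j x i, ← kfun_inl_inr g k x i]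
    ring
end
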